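/- arXiv:1606.02154 — 5 statements merged into one kernel-verified Lean document; each statement's English description precedes it below -/
import Mathlib

section
/- In a connected graph, any finite family of pairwise intersecting gated sets has a nonempty intersection (Helly property for gated sets). -/
variable {α : Type*}

/-- `g` is a gate of `x` in the set `H`: `g ∈ H` and `g` lies on a shortest
path from `x` to every vertex of `H`. -/
def HasGate (G : SimpleGraph α) (H : Set α) (x g : α) : Prop :=
  g ∈ H ∧ ∀ y ∈ H, G.dist x y = G.dist x g + G.dist g y

/-- `H` is gated: every vertex has a gate in `H`. -/
def Gated (G : SimpleGraph α) (H : Set α) : Prop := ∀ x, ∃ g, HasGate G H x g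

/-- `W` is (geodesically) convex: it contains every vertex on a shortest path
between two of its vertices. -/
def GConvex (G : SimpleGraph α) (W : Set α) : Prop :=
  ∀ u ∈ W, ∀ v ∈ W, ∀ w, G.dist u w + G.dist w v = G.dist u v → w ∈ W

/-- The convex hull of `A` in `G`. -/
def convHull (G : SimpleGraph α) (A : Set α) : Set α := ⋂₀ {W | GConvex G W ∧ A ⊆ W}

/-- Adjacency of a cycle on `ZMod n`. -/
def cycleAdj (n : ℕ) (x y : ZMod n) : Prop := x ≠ y ∧ (y = x + 1 ∨ x = y + 1)

/-- The cycle graph on `ZMod n`. -/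
def cycGraph (n : ℕ) : SimpleGraph (ZMod n) where
  Adj x y := cycleAdj n x y
  symm := by
    constructor
    rintro x y ⟨h1, h2⟩
    exact ⟨Ne.symm h1, h2.symm⟩
  loopless := by
    constructor
    rintro x ⟨h1, _⟩
    exact h1 rfl

/-- `C` is (the vertex set of) an isometric cycle of `G`: internal (cyclic)
distances agree with distances in `G`. -/
def IsIsoCycle (G : SimpleGraph α) (C : Set α) : Prop :=
  ∃ (n : ℕ) (c : ZMod n → α), 3 ≤ n ∧ Function.Injective c ∧
    (∀ i, G.Adj (c i) (c (i + 1))) ∧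
    (∀ i j, G.dist (c i) (c j) = (cycGraph n).dist i j) ∧
    C = Set.range c

/-- `S` is an antipodal subgraph of `G`: every `x ∈ S` has an antipode `y ∈ S`
with `S = conv(x, y)`. -/
def AntipodalSub (G : SimpleGraph α) (S : Set α) : Prop :=
  ∀ x ∈ S, ∃ y ∈ S, S = convHull G {x, y}

/-- The halfspace-like set `W(u,v)` of vertices strictly closer to `u` than to `v`. -/
def Wset (G : SimpleGraph α) (u v : α) : Set α := {x | G.dist x u < G.dist x v}

section helly

variable {G : SimpleGraph α}

/-- A gated set is convex. -/
lemma gated_convex (hG : G.Connected) {W : Set α} (hW : Gated G W) : GConvex G W := by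
  intro u hu v hv w hw
  obtain ⟨g, hgW, hgate⟩ := hW w
  have h1 := hgate u hu
  have h2 := hgate v hv
  have htri : G.dist u v ≤ G.dist u g + G.dist g v := hG.dist_triangle
  have hc1 : G.dist u w = G.dist w u := G.dist_comm
  have hc2 : G.dist u g = G.dist g u := G.dist_comm
  have hwg : G.dist w g = 0 := by omega
  rwa [hG.dist_eq_zero_iff.mp hwg]

/-- If `x` lies in a convex set `A` meeting a gated set `B`, then the gate of
`x` in `B` lies in `A`. -/
lemma gate_mem (hG : G.Connected) {A B : Set α} (hA : GConvex G A)
    (hAB : (A ∩ B).Nonempty) {x g : α} (hx : x ∈ A) (hg : HasGate G B x g) :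
    g ∈ A := by
  obtain ⟨z, hzA, hzB⟩ := hAB
  obtain ⟨hgB, hgate⟩ := hg
  exact hA x hx z hzA g (by rw [← hgate z hzB])

/-- A nonempty intersection of two gated sets is gated. -/
lemma gated_inter (hG : G.Connected) {A B : Set α} (hA : Gated G A) (hB : Gated G B)
    (hAB : (A ∩ B).Nonempty) : Gated G (A ∩ B) := by
  intro x
  obtain ⟨g, hgA, hgate⟩ := hA x
  obtain ⟨h, hhB, hhgate⟩ := hB g
  have hhA : h ∈ A := gate_mem hG (gated_convex hG hA) hAB hgA ⟨hhB, hhgate⟩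
  refine ⟨h, ⟨hhA, hhB⟩, fun y hy => ?_⟩
  have e1 : G.dist x y = G.dist x g + G.dist g y := hgate y hy.1
  have e2 : G.dist g y = G.dist g h + G.dist h y := hhgate y hy.2
  have e3 : G.dist x h = G.dist x g + G.dist g h := hgate h hhA
  omega

/-- Helly property for three gated sets. -/
lemma helly3 (hG : G.Connected) {A B C : Set α} (hA : Gated G A) (hB : Gated G B)
    (hC : Gated G C) (hAB : (A ∩ B).Nonempty) (hAC : (A ∩ C).Nonempty)
    (hBC : (B ∩ C).Nonempty) : (A ∩ B ∩ C).Nonempty := by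
  obtain ⟨c, hcA, hcB⟩ := hAB
  obtain ⟨g, hg⟩ := hC c
  have hgA : g ∈ A := gate_mem hG (gated_convex hG hA) hAC hcA hg
  have hgB : g ∈ B := gate_mem hG (gated_convex hG hB) hBC hcB hg
  exact ⟨g, ⟨hgA, hgB⟩, hg.1⟩

end helly

/-- Helly property for gated sets: in a connected graph, any finite family of
pairwise intersecting gated sets has a nonempty intersection. -/
theorem stmt2 (G : SimpleGraph α) (hG : G.Connected)
    (ι : Type*) [Finite ι] (W : ι → Set α)
    (hgated : ∀ i, Gated G (W i))
    (hpair : ∀ i j, (W i ∩ W j).Nonempty) :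
    (⋂ i, W i).Nonempty := by
  classical
  cases isEmpty_or_nonempty ι with
  | inl h =>
    simp only [Set.iInter_of_empty]
    exact ⟨hG.nonempty.some, Set.mem_univ _⟩
  | inr h =>
    obtain ⟨j⟩ := h
    have : Fintype ι := Fintype.ofFinite ι
    have key : ∀ s : Finset ι,
        Gated G (⋂ i ∈ s, W i) ∧ ∀ k, ((⋂ i ∈ s, W i) ∩ W k).Nonempty := by
      intro s
      induction s using Finset.induction_on with
      | empty =>
        constructor
        · intro x
          refine ⟨x, by simp, fun y hy => ?_⟩
          simp [G.dist_self]
        · intro k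
          simpa using hpair k k
      | @insert a s ha ih =>
        obtain ⟨ihg, ihn⟩ := ih
        have hins : (⋂ i ∈ insert a s, W i) = W a ∩ ⋂ i ∈ s, W i := by
          simp [Set.biInter_insert]
        have hne : (W a ∩ ⋂ i ∈ s, W i).Nonempty := by
          obtain ⟨x, hx1, hx2⟩ := ihn a
          exact ⟨x, hx2, hx1⟩
        constructor
        · rw [hins]
          exact gated_inter hG (hgated a) ihg hne
        · intro k
          rw [hins]
          have h3 : ((W a ∩ ⋂ i ∈ s, W i) ∩ W k).Nonempty := by
            have := helly3 hG (hgated a) ihg (hgated k) hne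
              (hpair a k) (by obtain ⟨x, hx1, hx2⟩ := ihn k; exact ⟨x, hx1, hx2⟩)
            exact this
          exact h3
    obtain ⟨x, hx1, _⟩ := (key Finset.univ).2 j
    refine ⟨x, ?_⟩
    simpa using hx1
end

section
/- If S is a convex subgraph of a partial cube G and the Θ-class E_f either crosses S or is disjoint from S, then the contraction π_f(S) is a convex subgraph of π_f(G). -/
/-- The hypercube graph on `Λ → Bool`: two vertices are adjacent iff they differ
in exactly one coordinate. -/
def Qcube (Λ : Type*) : SimpleGraph (Λ → Bool) where
  Adj x y := ∃ f, x f ≠ y f ∧ ∀ g, g ≠ f → x g = y g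
  symm := by
    constructor
    rintro x y ⟨f, hf, h⟩
    exact ⟨f, Ne.symm hf, fun g hg => (h g hg).symm⟩
  loopless := by
    constructor
    rintro x ⟨f, hf, _⟩
    exact hf rfl

variable {Λ : Type*}

/-- The graph induced by the hypercube on a set `V` of vertices. -/
def pcGraph (V : Set (Λ → Bool)) : SimpleGraph V := (Qcube Λ).induce V

/-- `V` determines a partial cube: the induced graph is connected and its
graph distance coincides with the Hamming distance. -/
def IsPartialCube (V : Set (Λ → Bool)) : Prop :=
  (pcGraph V).Connected ∧
    ∀ x y : V, (pcGraph V).dist x y = Set.ncard {f | (x : Λ → Bool) f ≠ (y : Λ → Bool) f}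

/-- `W` is a convex subgraph of the partial cube on `V`. -/
def ConvexIn (V W : Set (Λ → Bool)) : Prop :=
  W ⊆ V ∧ ∀ u v w : V, (u : Λ → Bool) ∈ W → (v : Λ → Bool) ∈ W →
    (pcGraph V).dist u w + (pcGraph V).dist w v = (pcGraph V).dist u v →
      (w : Λ → Bool) ∈ W

/-- `W` is a gated subgraph of the partial cube on `V`: every vertex has a gate in `W`. -/
def GatedIn (V W : Set (Λ → Bool)) : Prop :=
  W ⊆ V ∧ ∀ x : V, ∃ g : V, (g : Λ → Bool) ∈ W ∧
    ∀ y : V, (y : Λ → Bool) ∈ W →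
      (pcGraph V).dist x y = (pcGraph V).dist x g + (pcGraph V).dist g y

/-- The convex hull of a set `A` inside the partial cube on `V`. -/
def convexHullIn (V A : Set (Λ → Bool)) : Set (Λ → Bool) :=
  ⋂₀ {W | ConvexIn V W ∧ A ⊆ W}

/-- The gated hull of a set `A` inside the partial cube on `V`. -/
def gatedHullIn (V A : Set (Λ → Bool)) : Set (Λ → Bool) :=
  ⋂₀ {W | GatedIn V W ∧ A ⊆ W}

/-- The interval between `u` and `v` in the partial cube on `V`. -/
def intervalIn (V : Set (Λ → Bool)) (u v : V) : Set V :=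
  {w | (pcGraph V).dist u w + (pcGraph V).dist w v = (pcGraph V).dist u v}

/-- Contraction of the Θ-class of coordinate `f`: delete coordinate `f`. -/
def contr (f : Λ) (x : Λ → Bool) : {g : Λ // g ≠ f} → Bool := fun g => x g.1

/-- Contraction of a whole set of coordinates `B`. -/
def proj (B : Set Λ) (x : Λ → Bool) : {g : Λ // g ∉ B} → Bool := fun g => x g.1

/-- The Θ-class `E_f` crosses `S`: `S` meets both halfspaces of coordinate `f`. -/
def Crosses (f : Λ) (S : Set (Λ → Bool)) : Prop :=
  (∃ x ∈ S, x f = true) ∧ (∃ x ∈ S, x f = false)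

/-- The Θ-class `E_f` (of edges of the graph on `V`) is disjoint from `S`:
no edge in class `f` has an endpoint in `S`. -/
def DisjointFrom (f : Λ) (V S : Set (Λ → Bool)) : Prop :=
  ∀ x ∈ V, ∀ y ∈ V, (Qcube Λ).Adj x y → x f ≠ y f → x ∉ S ∧ y ∉ S

/-- The Cartesian product of the cycles/edges `ZMod (F i)`. -/
def edgeCycleProd {m : ℕ} (F : Fin m → ℕ) : SimpleGraph (∀ i, ZMod (F i)) where
  Adj x y := ∃ i, cycleAdj (F i) (x i) (y i) ∧ ∀ j, j ≠ i → x j = y j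
  symm := by
    constructor
    rintro x y ⟨i, ⟨h1, h2⟩, h3⟩
    exact ⟨i, ⟨Ne.symm h1, h2.symm⟩, fun j hj => (h3 j hj).symm⟩
  loopless := by
    constructor
    rintro x ⟨i, ⟨h1, _⟩, _⟩
    exact h1 rfl

/-- A graph is (isomorphic to) a Cartesian product of edges and even cycles. -/
def IsEdgeCycleProduct {α : Type*} (H : SimpleGraph α) : Prop :=
  ∃ (m : ℕ) (F : Fin m → ℕ), (∀ i, Even (F i) ∧ 2 ≤ F i) ∧
    Nonempty (H ≃g edgeCycleProd F)

/-- The vertex set of `Q₃⁻`, the 3-cube minus one vertex. -/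
def Q3minusSet : Set (Fin 3 → Bool) := {x : Fin 3 → Bool | x ≠ fun _ => true}

/-- A partial cube is hypercellular if no pc-minor of it (a contraction of a
convex subgraph, i.e. of a restriction) is isomorphic to `Q₃⁻`. -/
def Hypercellular (V : Set (Λ → Bool)) : Prop :=
  IsPartialCube V ∧ ∀ (B : Set Λ) (W : Set (Λ → Bool)), ConvexIn V W →
    IsEmpty (pcGraph (proj B '' W) ≃g pcGraph Q3minusSet)

/-- A cell of the partial cube on `V`: a convex subgraph isomorphic to a
Cartesian product of edges and even cycles. -/
def IsCellIn (V X : Set (Λ → Bool)) : Prop :=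
  ConvexIn V X ∧ IsEdgeCycleProduct (pcGraph X)

namespace Stmt9Aux

variable {Λ : Type*}

/-- The set of coordinates where `x` and `y` differ. -/
def Dset (x y : Λ → Bool) : Set Λ := {g | x g ≠ y g}

lemma mem_Dset {x y : Λ → Bool} {g : Λ} : g ∈ Dset x y ↔ x g ≠ y g := Iff.rfl

lemma Dset_comm (x y : Λ → Bool) : Dset x y = Dset y x := by
  ext g; exact ne_comm

lemma Dset_self (x : Λ → Bool) : Dset x x = ∅ := by
  ext g; simp [Dset]

lemma pc_adj {V : Set (Λ → Bool)} {x y : ↥V} :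
    (pcGraph V).Adj x y ↔ (Qcube Λ).Adj ↑x ↑y := Iff.rfl

lemma adj_Dset {x y : Λ → Bool} (h : (Qcube Λ).Adj x y) : ∃ g, Dset x y = {g} := by
  obtain ⟨g, hg, hother⟩ := h
  refine ⟨g, ?_⟩
  ext h'
  simp only [mem_Dset, Set.mem_singleton_iff]
  constructor
  · intro hh; by_contra hne; exact hh (hother h' hne)
  · rintro rfl; exact hg

lemma Dset_adj {x y : Λ → Bool} {g : Λ} (h : Dset x y = {g}) : (Qcube Λ).Adj x y := by
  refine ⟨g, ?_, ?_⟩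
  · have : g ∈ Dset x y := by rw [h]; rfl
    exact this
  · intro g' hg'
    by_contra hne
    have : g' ∈ Dset x y := hne
    rw [h] at this
    exact hg' this

lemma Dset_triangle (x y z : Λ → Bool) : Dset x z ⊆ Dset x y ∪ Dset y z := by
  intro g hg
  by_cases h : x g = y g
  · right; simp only [mem_Dset] at *; rw [← h]; exact hg
  · left; exact h

lemma walk_bound {Λ' : Type*} {V' : Set (Λ' → Bool)} {x y : ↥V'}
    (p : (pcGraph V').Walk x y) :
    (Dset (x : Λ' → Bool) ↑y).Finite ∧ (Dset (x : Λ' → Bool) ↑y).ncard ≤ p.length := by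
  induction p with
  | nil => simp [Dset_self]
  | @cons a b c hadj p ih =>
    obtain ⟨g, hg⟩ := adj_Dset (pc_adj.mp hadj)
    have hsub := Dset_triangle (a : Λ' → Bool) ↑b ↑c
    have hfin : (Dset (a : Λ' → Bool) ↑c).Finite := by
      refine Set.Finite.subset (Set.Finite.union ?_ ih.1) hsub
      rw [hg]; exact Set.finite_singleton g
    refine ⟨hfin, ?_⟩
    calc (Dset (a : Λ' → Bool) ↑c).ncard
        ≤ (Dset (a : Λ' → Bool) ↑b ∪ Dset (b : Λ' → Bool) ↑c).ncard := by
          refine Set.ncard_le_ncard hsub (Set.Finite.union ?_ ih.1)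
          rw [hg]; exact Set.finite_singleton g
      _ ≤ (Dset (a : Λ' → Bool) ↑b).ncard + (Dset (b : Λ' → Bool) ↑c).ncard :=
          Set.ncard_union_le _ _
      _ ≤ 1 + p.length := by
          rw [hg, Set.ncard_singleton]
          exact Nat.add_le_add_left ih.2 1
      _ = (SimpleGraph.Walk.cons hadj p).length := by
          simp [SimpleGraph.Walk.length_cons, Nat.add_comm]

end Stmt9Aux
namespace Stmt9Aux

lemma bool_ne_trans {a b c : Bool} (h1 : a ≠ b) (h2 : a ≠ c) : b = c := by
  revert h1 h2; cases a <;> cases b <;> cases c <;> decide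

section PC

variable {Λ : Type*} {V : Set (Λ → Bool)} (hV : IsPartialCube V)
include hV

lemma reach (x y : ↥V) : (pcGraph V).Reachable x y := hV.1.preconnected x y

lemma distD (x y : ↥V) :
    (pcGraph V).dist x y = (Dset (x : Λ → Bool) ↑y).ncard := hV.2 x y

lemma Dfin (x y : ↥V) : (Dset (x : Λ → Bool) ↑y).Finite := by
  obtain ⟨p⟩ := reach hV x y
  exact (walk_bound p).1

lemma exists_step (x y : ↥V) (hne : (x : Λ → Bool) ≠ ↑y) :
    ∃ (z : ↥V) (g : Λ), Dset (x : Λ → Bool) ↑z = {g} ∧ g ∈ Dset (x : Λ → Bool) ↑y ∧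
      Dset (z : Λ → Bool) ↑y = Dset (x : Λ → Bool) ↑y \ {g} ∧
      (pcGraph V).dist z y + 1 = (pcGraph V).dist x y := by
  have hr := reach hV x y
  have hxyne : x ≠ y := fun h => hne (congrArg _ h)
  have hpos : 0 < (pcGraph V).dist x y := hr.pos_dist_of_ne hxyne
  obtain ⟨p, hp⟩ := hr.exists_walk_length_eq_dist
  cases p with
  | nil => exact absurd rfl hxyne
  | @cons _ z _ hadj q =>
    have hdzy : (pcGraph V).dist z y ≤ q.length := SimpleGraph.dist_le q
    have hlen : q.length + 1 = (pcGraph V).dist x y := by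
      simpa [SimpleGraph.Walk.length_cons] using hp
    have htri : (pcGraph V).dist x y ≤ (pcGraph V).dist x z + (pcGraph V).dist z y :=
      hV.1.dist_triangle
    have hdxz : (pcGraph V).dist x z ≤ 1 := by
      have h1 : (SimpleGraph.Walk.cons hadj (SimpleGraph.Walk.nil)).length = 1 := by simp
      calc (pcGraph V).dist x z ≤ _ := SimpleGraph.dist_le (SimpleGraph.Walk.cons hadj SimpleGraph.Walk.nil)
        _ = 1 := h1
    have hdist : (pcGraph V).dist z y + 1 = (pcGraph V).dist x y := by omega
    obtain ⟨g, hg⟩ := adj_Dset (pc_adj.mp hadj)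
    -- pointwise facts
    have hxg : (x : Λ → Bool) g ≠ (z : Λ → Bool) g := by
      have : g ∈ Dset (x : Λ → Bool) ↑z := by rw [hg]; rfl
      exact this
    have hoff : ∀ h', h' ≠ g → (x : Λ → Bool) h' = (z : Λ → Bool) h' := by
      intro h' hh'
      by_contra hc
      have : h' ∈ Dset (x : Λ → Bool) ↑z := hc
      rw [hg] at this
      exact hh' this
    have hsub1 : Dset (x : Λ → Bool) ↑y \ {g} ⊆ Dset (z : Λ → Bool) ↑y := by
      rintro h' ⟨hh1, hh2⟩
      simp only [Set.mem_singleton_iff] at hh2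
      have := hoff h' hh2
      simp only [mem_Dset] at *
      rw [← this]; exact hh1
    by_cases hgy : g ∈ Dset (x : Λ → Bool) ↑y
    · refine ⟨z, g, hg, hgy, ?_, hdist⟩
      apply Set.Subset.antisymm _ hsub1
      intro h' hh'
      by_cases hhg : h' = g
      · subst hhg
        exfalso
        have : (z : Λ → Bool) h' = (y : Λ → Bool) h' := bool_ne_trans hxg hgy
        exact hh' this
      · refine ⟨?_, hhg⟩
        have := hoff h' hhg
        simp only [mem_Dset] at *
        rw [this]; exact hh'
    · exfalso
      have hsub2 : insert g (Dset (x : Λ → Bool) ↑y) ⊆ Dset (z : Λ → Bool) ↑y := by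
        rintro h' (rfl | hh')
        · simp only [mem_Dset] at *
          intro hc
          exact hgy (hc ▸ hxg)
        · have hhg : h' ≠ g := fun he => hgy (he ▸ hh')
          have := hoff h' hhg
          simp only [mem_Dset] at *
          rw [← this]; exact hh'
      have hfin : (Dset (z : Λ → Bool) ↑y).Finite := Dfin hV z y
      have hcard : (insert g (Dset (x : Λ → Bool) ↑y)).ncard ≤ (Dset (z : Λ → Bool) ↑y).ncard :=
        Set.ncard_le_ncard hsub2 hfin
      rw [Set.ncard_insert_of_notMem hgy (Dfin hV x y)] at hcard
      rw [distD hV, distD hV] at hdist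
      omega

end PC

end Stmt9Aux
namespace Stmt9Aux

section PC2

variable {Λ : Type*} {V : Set (Λ → Bool)} (hV : IsPartialCube V) (f : Λ)
include hV

lemma before_flip : ∀ (n : ℕ) (x w : ↥V), (pcGraph V).dist x w = n →
    (x : Λ → Bool) f ≠ (w : Λ → Bool) f →
    ∃ (p q : ↥V), Dset (x : Λ → Bool) ↑p ⊆ Dset (x : Λ → Bool) ↑w \ {f} ∧
      (p : Λ → Bool) f = (x : Λ → Bool) f ∧ Dset (p : Λ → Bool) ↑q = {f} := by
  intro n
  induction n using Nat.strong_induction_on with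
  | _ n ih =>
    intro x w hn hf
    have hne : (x : Λ → Bool) ≠ ↑w := fun h => hf (congrFun h f)
    obtain ⟨z, g, hxz, hgw, hzw, hd⟩ := exists_step hV x w hne
    by_cases hgf : g = f
    · subst hgf
      exact ⟨x, z, by simp [Dset_self], rfl, hxz⟩
    · have hzf : (z : Λ → Bool) f = (x : Λ → Bool) f := by
        by_contra hc
        have : f ∈ Dset (x : Λ → Bool) ↑z := fun h => hc h.symm
        rw [hxz] at this
        exact hgf this.symm
      have hzwf : (z : Λ → Bool) f ≠ (w : Λ → Bool) f := hzf ▸ hf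
      have hlt : (pcGraph V).dist z w < n := by omega
      obtain ⟨p, q, hsub, hpf, hpq⟩ := ih _ hlt z w rfl hzwf
      refine ⟨p, q, ?_, hpf.trans hzf, hpq⟩
      intro h' hh'
      have := Dset_triangle (x : Λ → Bool) ↑z ↑p hh'
      rcases this with h1 | h2
      · rw [hxz] at h1
        rcases h1 with rfl
        exact ⟨hgw, by simpa using hgf⟩
      · have := hsub h2
        rw [hzw] at this
        exact ⟨this.1.1, this.2⟩

omit hV in
lemma contr_mem {x : Λ → Bool} (hx : x ∈ V) : contr f x ∈ contr f '' V :=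
  Set.mem_image_of_mem _ hx

omit hV in
lemma contr_eq_iff {x y : Λ → Bool} : contr f x = contr f y ↔ ∀ g, g ≠ f → x g = y g := by
  constructor
  · intro h g hg
    exact congrFun h ⟨g, hg⟩
  · intro h
    funext g
    exact h g.1 g.2

omit hV in
lemma Dset_contr (x y : Λ → Bool) :
    Dset (contr f x) (contr f y) = Subtype.val ⁻¹' (Dset x y) := rfl

omit hV in
lemma Dset_contr_ncard (x y : Λ → Bool) :
    (Dset (contr f x) (contr f y)).ncard = (Dset x y \ {f}).ncard := by
  rw [Dset_contr]
  rw [← Set.ncard_image_of_injective _ (Subtype.val_injective (p := fun g => g ≠ f))]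
  congr 1
  ext g
  constructor
  · rintro ⟨⟨g', hg'⟩, hmem, rfl⟩
    exact ⟨hmem, by simpa using hg'⟩
  · rintro ⟨h1, h2⟩
    exact ⟨⟨g, by simpa using h2⟩, h1, rfl⟩

lemma contr_walk : ∀ (n : ℕ) (x y : ↥V), (pcGraph V).dist x y = n →
    ∃ pw : (pcGraph (contr f '' V)).Walk ⟨contr f ↑x, contr_mem f x.2⟩
      ⟨contr f ↑y, contr_mem f y.2⟩,
      pw.length ≤ (Dset (x : Λ → Bool) ↑y \ {f}).ncard := by
  intro n
  induction n using Nat.strong_induction_on with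
  | _ n ih =>
    intro x y hn
    by_cases hxy : (x : Λ → Bool) = ↑y
    · have : (⟨contr f ↑x, contr_mem f x.2⟩ : ↥(contr f '' V)) =
          ⟨contr f ↑y, contr_mem f y.2⟩ := Subtype.ext (congrArg (contr f) hxy)
      exact ⟨SimpleGraph.Walk.nil.copy rfl this, by simp⟩
    · obtain ⟨z, g, hxz, hgy, hzy, hd⟩ := exists_step hV x y hxy
      have hlt : (pcGraph V).dist z y < n := by omega
      obtain ⟨pw, hpw⟩ := ih _ hlt z y rfl
      by_cases hgf : g = f
      · rw [hgf] at hxz hzy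
        have heq : (⟨contr f ↑x, contr_mem f x.2⟩ : ↥(contr f '' V)) =
            ⟨contr f ↑z, contr_mem f z.2⟩ := by
          refine Subtype.ext ((contr_eq_iff f).mpr ?_)
          intro g' hg'
          by_contra hc
          have : g' ∈ Dset (x : Λ → Bool) ↑z := hc
          rw [hxz] at this
          exact hg' this
        refine ⟨pw.copy heq.symm rfl, ?_⟩
        rw [SimpleGraph.Walk.length_copy]
        refine hpw.trans (Set.ncard_le_ncard ?_ ((Dfin hV x y).diff))
        rw [hzy]
        intro h' hh'
        exact ⟨hh'.1.1, hh'.2⟩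
      · have hadj : (pcGraph (contr f '' V)).Adj ⟨contr f ↑x, contr_mem f x.2⟩
            ⟨contr f ↑z, contr_mem f z.2⟩ := by
          rw [pc_adj]
          refine ⟨⟨g, hgf⟩, ?_, ?_⟩
          · have : g ∈ Dset (x : Λ → Bool) ↑z := by rw [hxz]; rfl
            exact this
          · rintro ⟨g', hg'f⟩ hg'
            by_contra hc
            have : g' ∈ Dset (x : Λ → Bool) ↑z := hc
            rw [hxz] at this
            exact hg' (Subtype.ext this)
        refine ⟨SimpleGraph.Walk.cons hadj pw, ?_⟩
        rw [SimpleGraph.Walk.length_cons]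
        have hgmem : g ∈ Dset (x : Λ → Bool) ↑y \ {f} := ⟨hgy, by simpa using hgf⟩
        have hzy' : Dset (z : Λ → Bool) ↑y \ {f} = (Dset (x : Λ → Bool) ↑y \ {f}) \ {g} := by
          rw [hzy]
          ext h'
          simp only [Set.mem_diff, Set.mem_singleton_iff]
          tauto
        have hcard : ((Dset (x : Λ → Bool) ↑y \ {f}) \ {g}).ncard + 1 =
            (Dset (x : Λ → Bool) ↑y \ {f}).ncard := by
          have := Set.ncard_diff_add_ncard_of_subset (Set.singleton_subset_iff.mpr hgmem)
            ((Dfin hV x y).diff)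
          simpa using this
        rw [hzy'] at hpw
        omega

lemma contr_dist (x y : ↥V) :
    (pcGraph (contr f '' V)).dist ⟨contr f ↑x, contr_mem f x.2⟩ ⟨contr f ↑y, contr_mem f y.2⟩
      = (Dset (x : Λ → Bool) ↑y \ {f}).ncard := by
  obtain ⟨pw, hpw⟩ := contr_walk hV f _ x y rfl
  refine le_antisymm ((SimpleGraph.dist_le pw).trans hpw) ?_
  obtain ⟨p, hp⟩ := pw.reachable.exists_walk_length_eq_dist
  have := (walk_bound p).2
  rw [hp] at this
  calc (Dset (x : Λ → Bool) ↑y \ {f}).ncard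
      = (Dset (contr f ↑x) (contr f ↑y)).ncard := (Dset_contr_ncard f _ _).symm
    _ ≤ _ := this

end PC2

end Stmt9Aux
namespace Stmt9Aux

variable {Λ : Type*}

lemma bb5 : ∀ u w v x x' : Bool, (¬((u ≠ w) ∧ (w ≠ v))) → ((u ≠ x) → (u ≠ w)) →
    ((v ≠ x') → (w ≠ v)) →
    ((x ≠ x') ↔ ((u ≠ w ∧ ¬(u ≠ x)) ∨ ((w ≠ v) ∧ ¬(v ≠ x')))) := by decide

lemma Dset_between {u x v : Λ → Bool} (h : Dset u x ⊆ Dset u v) :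
    Dset x v = Dset u v \ Dset u x := by
  ext g
  constructor
  · intro hg
    by_cases huv : u g = v g
    · exfalso
      have hux : u g ≠ x g := fun he => hg (he ▸ huv)
      exact (h hux) huv
    · exact ⟨huv, fun hux => hg (bool_ne_trans hux huv)⟩
  · rintro ⟨huv, hux⟩
    have hux' : u g = x g := not_ne_iff.mp hux
    exact fun he => huv (hux'.symm ▸ he)

lemma Dset_erase_f {x y z : Λ → Bool} {f : Λ} (hxy : Dset x y = {f}) (hf : f ∈ Dset x z) :
    Dset y z = Dset x z \ {f} := by
  have hxyf : x f ≠ y f := by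
    have : f ∈ Dset x y := by rw [hxy]; rfl
    exact this
  have hoff : ∀ g, g ≠ f → x g = y g := by
    intro g hg
    by_contra hc
    have : g ∈ Dset x y := hc
    rw [hxy] at this
    exact hg this
  ext g
  by_cases hgf : g = f
  · subst hgf
    simp only [mem_Dset, Set.mem_diff, Set.mem_singleton_iff]
    constructor
    · intro hyz
      exact absurd (bool_ne_trans hxyf hf) hyz
    · rintro ⟨_, hne⟩
      simp at hne
  · have := hoff g hgf
    simp only [mem_Dset, Set.mem_diff, Set.mem_singleton_iff]
    rw [← this]
    tauto

lemma ncard_split {V : Set (Λ → Bool)} (hV : IsPartialCube V) (f : Λ) (a b : ↥V)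
    (hab : (a : Λ → Bool) f ≠ (b : Λ → Bool) f) :
    (Dset (a : Λ → Bool) ↑b \ {f}).ncard + 1 = (Dset (a : Λ → Bool) ↑b).ncard := by
  have hf : f ∈ Dset (a : Λ → Bool) ↑b := hab
  have := Set.ncard_diff_add_ncard_of_subset (Set.singleton_subset_iff.mpr hf) (Dfin hV a b)
  simpa using this

lemma Dset_no_f {x y : Λ → Bool} {f : Λ} (hxy : x f = y f) : Dset x y \ {f} = Dset x y :=
  Set.diff_singleton_eq_self (fun (hc : f ∈ Dset x y) => hc hxy)

end Stmt9Aux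
/-- If `S` is convex in the partial cube on `V` and the Θ-class `E_f` crosses `S`
or is disjoint from `S`, then `π_f(S)` is convex in `π_f(G)`. -/
theorem stmt9 (V S : Set (Λ → Bool)) (hV : IsPartialCube V) (hS : ConvexIn V S)
    (f : Λ) (h : Crosses f S ∨ DisjointFrom f V S) :
    ConvexIn (contr f '' V) (contr f '' S) := by
  classical
  open Stmt9Aux in
  obtain ⟨hSV, hSconv⟩ := hS
  refine ⟨Set.image_mono hSV, ?_⟩
  intro U Vv W hU hVv hdist
  obtain ⟨u₀, hu₀S, hu₀⟩ := hU
  obtain ⟨v₀, hv₀S, hv₀⟩ := hVv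
  obtain ⟨w₀, hw₀V, hw₀⟩ := W.2
  have hu₀V : u₀ ∈ V := hSV hu₀S
  have hv₀V : v₀ ∈ V := hSV hv₀S
  have hU' : U = ⟨contr f u₀, contr_mem f hu₀V⟩ := Subtype.ext hu₀.symm
  have hV' : Vv = ⟨contr f v₀, contr_mem f hv₀V⟩ := Subtype.ext hv₀.symm
  have hW' : W = ⟨contr f w₀, contr_mem f hw₀V⟩ := Subtype.ext hw₀.symm
  have e1 : (pcGraph (contr f '' V)).dist U W = (Dset u₀ w₀ \ {f}).ncard := by
    rw [hU', hW']; exact contr_dist hV f ⟨u₀, hu₀V⟩ ⟨w₀, hw₀V⟩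
  have e2 : (pcGraph (contr f '' V)).dist W Vv = (Dset w₀ v₀ \ {f}).ncard := by
    rw [hW', hV']; exact contr_dist hV f ⟨w₀, hw₀V⟩ ⟨v₀, hv₀V⟩
  have e3 : (pcGraph (contr f '' V)).dist U Vv = (Dset u₀ v₀ \ {f}).ncard := by
    rw [hU', hV']; exact contr_dist hV f ⟨u₀, hu₀V⟩ ⟨v₀, hv₀V⟩
  rw [e1, e2, e3] at hdist
  refine ⟨w₀, ?_, hw₀⟩
  have d1 : (pcGraph V).dist ⟨u₀, hu₀V⟩ ⟨w₀, hw₀V⟩ = (Dset u₀ w₀).ncard := distD hV _ _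
  have d2 : (pcGraph V).dist ⟨w₀, hw₀V⟩ ⟨v₀, hv₀V⟩ = (Dset w₀ v₀).ncard := distD hV _ _
  have d3 : (pcGraph V).dist ⟨u₀, hu₀V⟩ ⟨v₀, hv₀V⟩ = (Dset u₀ v₀).ncard := distD hV _ _
  by_cases hufvf : u₀ f = v₀ f
  · by_cases hufwf : u₀ f = w₀ f
    · have hwfvf : w₀ f = v₀ f := hufwf ▸ hufvf
      apply hSconv ⟨u₀, hu₀V⟩ ⟨v₀, hv₀V⟩ ⟨w₀, hw₀V⟩ hu₀S hv₀S
      rw [d1, d2, d3]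
      rw [Dset_no_f hufwf, Dset_no_f hwfvf, Dset_no_f hufvf] at hdist
      exact hdist
    · -- BIG CASE
      have hfuv : f ∉ Dset u₀ v₀ := fun hc => hc hufvf
      rw [Dset_no_f hufvf] at hdist
      have hAfin : (Dset u₀ w₀ \ {f}).Finite := (Dfin hV ⟨u₀, hu₀V⟩ ⟨w₀, hw₀V⟩).diff
      have hBfin : (Dset w₀ v₀ \ {f}).Finite := (Dfin hV ⟨w₀, hw₀V⟩ ⟨v₀, hv₀V⟩).diff
      have hB'fin : (Dset v₀ w₀ \ {f}).Finite := (Dfin hV ⟨v₀, hv₀V⟩ ⟨w₀, hw₀V⟩).diff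
      have hCfin : (Dset u₀ v₀).Finite := Dfin hV ⟨u₀, hu₀V⟩ ⟨v₀, hv₀V⟩
      have hCsub : Dset u₀ v₀ ⊆ (Dset u₀ w₀ \ {f}) ∪ (Dset w₀ v₀ \ {f}) := by
        intro g hg
        have hgf : g ≠ f := fun he => hfuv (he ▸ hg)
        by_cases hh : u₀ g = w₀ g
        · exact Or.inr ⟨fun hc => hg (hh.trans hc), hgf⟩
        · exact Or.inl ⟨hh, hgf⟩
      have hsum := Set.ncard_inter_add_ncard_union _ _ hAfin hBfin
      have hCle : (Dset u₀ v₀).ncard ≤ ((Dset u₀ w₀ \ {f}) ∪ (Dset w₀ v₀ \ {f})).ncard :=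
        Set.ncard_le_ncard hCsub (hAfin.union hBfin)
      have hle2 := Set.ncard_union_le (Dset u₀ w₀ \ {f}) (Dset w₀ v₀ \ {f})
      have hint0 : ((Dset u₀ w₀ \ {f}) ∩ (Dset w₀ v₀ \ {f})).ncard = 0 := by omega
      have hABempty : (Dset u₀ w₀ \ {f}) ∩ (Dset w₀ v₀ \ {f}) = ∅ :=
        (Set.ncard_eq_zero (hAfin.inter_of_left _)).mp hint0
      have hABdisj : ∀ g, g ∈ Dset u₀ w₀ \ {f} → g ∉ Dset w₀ v₀ \ {f} := by
        intro g h1 h2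
        have hgm : g ∈ (Dset u₀ w₀ \ {f}) ∩ (Dset w₀ v₀ \ {f}) := ⟨h1, h2⟩
        rw [hABempty] at hgm
        exact hgm
      have hAC : Dset u₀ w₀ \ {f} ⊆ Dset u₀ v₀ := by
        intro g hg
        have hnB := hABdisj g hg
        have hwvg : w₀ g = v₀ g := by
          by_contra hc
          exact hnB ⟨hc, hg.2⟩
        exact fun hc => hg.1 (hc.trans hwvg.symm)
      have hBC : Dset w₀ v₀ \ {f} ⊆ Dset u₀ v₀ := by
        intro g hg
        have hnA : g ∉ Dset u₀ w₀ \ {f} := fun hA => hABdisj g hA hg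
        have huwg : u₀ g = w₀ g := by
          by_contra hc
          exact hnA ⟨hc, hg.2⟩
        exact fun hc => hg.1 (huwg.symm.trans hc)
      -- prefix before the f-flip, from u towards w
      obtain ⟨xb, yb, hA1sub, hxf, hxy⟩ := before_flip hV f _ ⟨u₀, hu₀V⟩ ⟨w₀, hw₀V⟩ rfl hufwf
      have hA1sub' : Dset u₀ ↑xb ⊆ Dset u₀ w₀ \ {f} := hA1sub
      have hxf' : (xb : Λ → Bool) f = u₀ f := hxf
      have hA1C : Dset u₀ ↑xb ⊆ Dset u₀ v₀ := fun g hg => hAC (hA1sub' hg)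
      have hxv : Dset (xb : Λ → Bool) v₀ = Dset u₀ v₀ \ Dset u₀ ↑xb := Dset_between hA1C
      have hxS : (xb : Λ → Bool) ∈ S := by
        apply hSconv ⟨u₀, hu₀V⟩ ⟨v₀, hv₀V⟩ xb hu₀S hv₀S
        have f1 : (pcGraph V).dist ⟨u₀, hu₀V⟩ xb = (Dset u₀ ↑xb).ncard := distD hV _ _
        have f2 : (pcGraph V).dist xb ⟨v₀, hv₀V⟩ = (Dset (xb : Λ → Bool) v₀).ncard := distD hV _ _
        rw [f1, f2, d3, hxv]
        have := Set.ncard_diff_add_ncard_of_subset hA1C hCfin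
        omega
      have hxyf : (xb : Λ → Bool) f ≠ (yb : Λ → Bool) f := by
        have hm : f ∈ Dset (xb : Λ → Bool) ↑yb := by rw [hxy]; rfl
        exact hm
      rcases h with hcross | hdisj
      · -- crossing case
        obtain ⟨q₀, hq₀S, hq₀f⟩ : ∃ q ∈ S, q f ≠ u₀ f := by
          rcases hcross with ⟨⟨s₁, hs₁, hs₁f⟩, ⟨s₂, hs₂, hs₂f⟩⟩
          cases hu : u₀ f
          · exact ⟨s₁, hs₁, by simp [hs₁f]⟩
          · exact ⟨s₂, hs₂, by simp [hs₂f]⟩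
        have hq₀V : q₀ ∈ V := hSV hq₀S
        have hxqf : f ∈ Dset (xb : Λ → Bool) q₀ := fun hc => hq₀f (hc.symm.trans hxf')
        have hyq : Dset (yb : Λ → Bool) q₀ = Dset (xb : Λ → Bool) q₀ \ {f} :=
          Dset_erase_f hxy hxqf
        have hyS : (yb : Λ → Bool) ∈ S := by
          apply hSconv xb ⟨q₀, hq₀V⟩ yb hxS hq₀S
          have f1 : (pcGraph V).dist xb yb = (Dset (xb : Λ → Bool) ↑yb).ncard := distD hV _ _
          have f2 : (pcGraph V).dist yb ⟨q₀, hq₀V⟩ = (Dset (yb : Λ → Bool) q₀).ncard := distD hV _ _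
          have f3 : (pcGraph V).dist xb ⟨q₀, hq₀V⟩ = (Dset (xb : Λ → Bool) q₀).ncard := distD hV _ _
          rw [f1, f2, f3, hxy, hyq, Set.ncard_singleton]
          have := Set.ncard_diff_add_ncard_of_subset (Set.singleton_subset_iff.mpr hxqf)
            (Dfin hV xb ⟨q₀, hq₀V⟩)
          simp only [Set.ncard_singleton] at this
          omega
        -- prefix before the f-flip, from v towards w
        have hvfwf : v₀ f ≠ w₀ f := fun hc => hufwf (hufvf.trans hc)
        obtain ⟨x'b, y'b, hB1sub, hx'f, hx'y'⟩ :=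
          before_flip hV f _ ⟨v₀, hv₀V⟩ ⟨w₀, hw₀V⟩ rfl hvfwf
        have hB1sub' : Dset v₀ ↑x'b ⊆ Dset v₀ w₀ \ {f} := hB1sub
        have hx'f' : (x'b : Λ → Bool) f = v₀ f := hx'f
        have hB1B : Dset v₀ ↑x'b ⊆ Dset w₀ v₀ \ {f} := by
          intro g hg
          have hm := hB1sub' hg
          exact ⟨Ne.symm hm.1, hm.2⟩
        have hB1C : Dset v₀ ↑x'b ⊆ Dset v₀ u₀ := by
          intro g hg
          exact Ne.symm (hBC (hB1B hg))
        have hx'u : Dset (x'b : Λ → Bool) u₀ = Dset v₀ u₀ \ Dset v₀ ↑x'b := Dset_between hB1C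
        have hx'S : (x'b : Λ → Bool) ∈ S := by
          apply hSconv ⟨v₀, hv₀V⟩ ⟨u₀, hu₀V⟩ x'b hv₀S hu₀S
          have f1 : (pcGraph V).dist ⟨v₀, hv₀V⟩ x'b = (Dset v₀ ↑x'b).ncard := distD hV _ _
          have f2 : (pcGraph V).dist x'b ⟨u₀, hu₀V⟩ = (Dset (x'b : Λ → Bool) u₀).ncard := distD hV _ _
          have f3 : (pcGraph V).dist ⟨v₀, hv₀V⟩ ⟨u₀, hu₀V⟩ = (Dset v₀ u₀).ncard := distD hV _ _
          rw [f1, f2, f3, hx'u]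
          have hfin' : (Dset v₀ u₀).Finite := Dfin hV ⟨v₀, hv₀V⟩ ⟨u₀, hu₀V⟩
          have := Set.ncard_diff_add_ncard_of_subset hB1C hfin'
          omega
        have hx'yf : (x'b : Λ → Bool) f ≠ (y'b : Λ → Bool) f := by
          have hm : f ∈ Dset (x'b : Λ → Bool) ↑y'b := by rw [hx'y']; rfl
          exact hm
        have hx'qf : f ∈ Dset (x'b : Λ → Bool) q₀ :=
          fun hc => hq₀f (hc.symm.trans (hx'f'.trans hufvf.symm))
        have hy'q : Dset (y'b : Λ → Bool) q₀ = Dset (x'b : Λ → Bool) q₀ \ {f} :=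
          Dset_erase_f hx'y' hx'qf
        have hy'S : (y'b : Λ → Bool) ∈ S := by
          apply hSconv x'b ⟨q₀, hq₀V⟩ y'b hx'S hq₀S
          have f1 : (pcGraph V).dist x'b y'b = (Dset (x'b : Λ → Bool) ↑y'b).ncard := distD hV _ _
          have f2 : (pcGraph V).dist y'b ⟨q₀, hq₀V⟩ = (Dset (y'b : Λ → Bool) q₀).ncard := distD hV _ _
          have f3 : (pcGraph V).dist x'b ⟨q₀, hq₀V⟩ = (Dset (x'b : Λ → Bool) q₀).ncard := distD hV _ _
          rw [f1, f2, f3, hx'y', hy'q, Set.ncard_singleton]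
          have := Set.ncard_diff_add_ncard_of_subset (Set.singleton_subset_iff.mpr hx'qf)
            (Dfin hV x'b ⟨q₀, hq₀V⟩)
          simp only [Set.ncard_singleton] at this
          omega
        -- final assembly: w₀ lies between yb and y'b
        have hfxw : f ∈ Dset (xb : Λ → Bool) w₀ := fun hc => hufwf (hxf'.symm.trans hc)
        have hA1subw : Dset u₀ ↑xb ⊆ Dset u₀ w₀ := fun g hg => (hA1sub' hg).1
        have hxw : Dset (xb : Λ → Bool) w₀ = Dset u₀ w₀ \ Dset u₀ ↑xb := Dset_between hA1subw
        have hyw : Dset (yb : Λ → Bool) w₀ = (Dset u₀ w₀ \ {f}) \ Dset u₀ ↑xb := by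
          rw [Dset_erase_f hxy hfxw, hxw, Set.diff_diff_comm]
        have hvfwf : v₀ f ≠ w₀ f := fun hc => hufwf (hufvf.trans hc)
        have hfx'w : f ∈ Dset (x'b : Λ → Bool) w₀ := fun hc => hvfwf (hx'f'.symm.trans hc)
        have hB1subw : Dset v₀ ↑x'b ⊆ Dset v₀ w₀ := fun g hg => (hB1sub' hg).1
        have hx'w : Dset (x'b : Λ → Bool) w₀ = Dset v₀ w₀ \ Dset v₀ ↑x'b := Dset_between hB1subw
        have hy'w : Dset (y'b : Λ → Bool) w₀ = (Dset v₀ w₀ \ {f}) \ Dset v₀ ↑x'b := by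
          rw [Dset_erase_f hx'y' hfx'w, hx'w, Set.diff_diff_comm]
        have hwy' : Dset w₀ (y'b : Λ → Bool) = (Dset v₀ w₀ \ {f}) \ Dset v₀ ↑x'b := by
          rw [Dset_comm, hy'w]
        have hyy' : Dset (yb : Λ → Bool) ↑y'b =
            ((Dset u₀ w₀ \ {f}) \ Dset u₀ ↑xb) ∪ ((Dset v₀ w₀ \ {f}) \ Dset v₀ ↑x'b) := by
          ext g
          by_cases hgf : g = f
          · subst hgf
            constructor
            · intro hg
              exact absurd ((bool_ne_trans hxyf hfxw).trans
                (bool_ne_trans hx'yf hfx'w).symm) hg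
            · rintro (⟨⟨_, hne⟩, _⟩ | ⟨⟨_, hne⟩, _⟩) <;> exact absurd rfl hne
          · have hyg : (yb : Λ → Bool) g = (xb : Λ → Bool) g := by
              by_contra hc
              have hm : g ∈ Dset (xb : Λ → Bool) ↑yb := fun he => hc he.symm
              rw [hxy] at hm
              exact hgf hm
            have hy'g : (y'b : Λ → Bool) g = (x'b : Λ → Bool) g := by
              by_contra hc
              have hm : g ∈ Dset (x'b : Λ → Bool) ↑y'b := fun he => hc he.symm
              rw [hx'y'] at hm
              exact hgf hm
            have h1 : ¬((u₀ g ≠ w₀ g) ∧ (w₀ g ≠ v₀ g)) :=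
              fun hp => hABdisj g ⟨hp.1, hgf⟩ ⟨hp.2, hgf⟩
            have h2 : (u₀ g ≠ (xb : Λ → Bool) g) → (u₀ g ≠ w₀ g) := fun p => (hA1sub' p).1
            have h3 : (v₀ g ≠ (x'b : Λ → Bool) g) → (w₀ g ≠ v₀ g) :=
              fun p => Ne.symm (hB1sub' p).1
            have hbb := bb5 (u₀ g) (w₀ g) (v₀ g) ((xb : Λ → Bool) g) ((x'b : Λ → Bool) g) h1 h2 h3
            constructor
            · intro hg
              have hg' : (xb : Λ → Bool) g ≠ (x'b : Λ → Bool) g := by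
                have hgg : (yb : Λ → Bool) g ≠ (y'b : Λ → Bool) g := hg
                rw [hyg, hy'g] at hgg
                exact hgg
              rcases hbb.mp hg' with ⟨p1, p2⟩ | ⟨p1, p2⟩
              · exact Or.inl ⟨⟨p1, hgf⟩, p2⟩
              · exact Or.inr ⟨⟨Ne.symm p1, hgf⟩, p2⟩
            · intro hg
              have hg' : (xb : Λ → Bool) g ≠ (x'b : Λ → Bool) g := by
                rcases hg with ⟨⟨p1, _⟩, p2⟩ | ⟨⟨p1, _⟩, p2⟩
                · exact hbb.mpr (Or.inl ⟨p1, p2⟩)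
                · exact hbb.mpr (Or.inr ⟨Ne.symm p1, p2⟩)
              show (yb : Λ → Bool) g ≠ (y'b : Λ → Bool) g
              rw [hyg, hy'g]
              exact hg'
        have hdisjAB : Disjoint ((Dset u₀ w₀ \ {f}) \ Dset u₀ ↑xb)
            ((Dset v₀ w₀ \ {f}) \ Dset v₀ ↑x'b) := by
          rw [Set.disjoint_left]
          intro g hg1 hg2
          exact hABdisj g ⟨hg1.1.1, hg1.1.2⟩ ⟨Ne.symm hg2.1.1, hg2.1.2⟩
        apply hSconv yb y'b ⟨w₀, hw₀V⟩ hyS hy'S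
        have f1 : (pcGraph V).dist yb ⟨w₀, hw₀V⟩ = (Dset (yb : Λ → Bool) w₀).ncard := distD hV _ _
        have f2 : (pcGraph V).dist ⟨w₀, hw₀V⟩ y'b = (Dset w₀ (y'b : Λ → Bool)).ncard := distD hV _ _
        have f3 : (pcGraph V).dist yb y'b = (Dset (yb : Λ → Bool) ↑y'b).ncard := distD hV _ _
        rw [f1, f2, f3, hyw, hwy', hyy']
        exact (Set.ncard_union_eq hdisjAB (hAfin.diff) (hB'fin.diff)).symm
      · -- disjoint case: contradiction via the edge (xb, yb) touching S
        exact absurd hxS (hdisj ↑xb xb.2 ↑yb yb.2 (Dset_adj hxy) hxyf).1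
  · apply hSconv ⟨u₀, hu₀V⟩ ⟨v₀, hv₀V⟩ ⟨w₀, hw₀V⟩ hu₀S hv₀S
    rw [d1, d2, d3]
    have huv1 : (Dset u₀ v₀ \ {f}).ncard + 1 = (Dset u₀ v₀).ncard :=
      ncard_split hV f ⟨u₀, hu₀V⟩ ⟨v₀, hv₀V⟩ hufvf
    by_cases hufwf : u₀ f = w₀ f
    · have hwv : w₀ f ≠ v₀ f := fun hc => hufvf (hufwf.trans hc)
      have h2 : (Dset w₀ v₀ \ {f}).ncard + 1 = (Dset w₀ v₀).ncard :=
        ncard_split hV f ⟨w₀, hw₀V⟩ ⟨v₀, hv₀V⟩ hwv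
      rw [Dset_no_f hufwf] at hdist
      omega
    · have hwv : v₀ f = w₀ f := bool_ne_trans hufvf hufwf
      have h2 : (Dset u₀ w₀ \ {f}).ncard + 1 = (Dset u₀ w₀).ncard :=
        ncard_split hV f ⟨u₀, hu₀V⟩ ⟨w₀, hw₀V⟩ hufwf
      rw [Dset_no_f hwv.symm] at hdist
      omega
end

section
/- For a subset S of vertices of a partial cube G and a coordinate f, the contraction of the convex hull of S is contained in the convex hull of the contraction: π_f(conv(S)) ⊆ conv(π_f(S)); moreover if E_f crosses S then equality holds. -/
variable {Λ : Type*}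

namespace Stmt10Aux

open SimpleGraph

variable {Λ : Type*}

lemma bool_resolve {p q r : Bool} (h1 : p ≠ q) (h2 : r ≠ p) : r = q := by
  revert h1 h2; revert p q r; decide

lemma pc_adj {V : Set (Λ → Bool)} {x y : ↥V} :
    (pcGraph V).Adj x y ↔
      ∃ f, (x : Λ → Bool) f ≠ (y : Λ → Bool) f ∧
        ∀ g, g ≠ f → (x : Λ → Bool) g = (y : Λ → Bool) g :=
  Iff.rfl

lemma walk_diff_bound {V : Set (Λ → Bool)} :
    ∀ {x y : ↥V} (w : (pcGraph V).Walk x y),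
      {g | (x : Λ → Bool) g ≠ (y : Λ → Bool) g}.Finite ∧
      {g | (x : Λ → Bool) g ≠ (y : Λ → Bool) g}.ncard ≤ w.length := by
  intro x y w
  induction w with
  | nil => simp
  | @cons x z y h w ih =>
    obtain ⟨g₀, hg₀, hrest⟩ := pc_adj.1 h
    have hsub : {g | (x : Λ → Bool) g ≠ (y : Λ → Bool) g} ⊆
        insert g₀ {g | (z : Λ → Bool) g ≠ (y : Λ → Bool) g} := by
      intro g hg
      by_cases hgg : g = g₀
      · exact Or.inl hgg
      · exact Or.inr (by rw [Set.mem_setOf_eq, ← hrest g hgg]; exact hg)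
    have hfin : ({g | (x : Λ → Bool) g ≠ (y : Λ → Bool) g}).Finite :=
      Set.Finite.subset (ih.1.insert g₀) hsub
    refine ⟨hfin, ?_⟩
    calc {g | (x : Λ → Bool) g ≠ (y : Λ → Bool) g}.ncard
        ≤ (insert g₀ {g | (z : Λ → Bool) g ≠ (y : Λ → Bool) g}).ncard :=
          Set.ncard_le_ncard hsub (ih.1.insert g₀)
      _ ≤ {g | (z : Λ → Bool) g ≠ (y : Λ → Bool) g}.ncard + 1 := Set.ncard_insert_le _ _
      _ ≤ w.length + 1 := Nat.add_le_add_right ih.2 1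
      _ = (SimpleGraph.Walk.cons h w).length := by simp

lemma diff_finite {V : Set (Λ → Bool)} (hc : (pcGraph V).Connected) (x y : ↥V) :
    {g | (x : Λ → Bool) g ≠ (y : Λ → Bool) g}.Finite :=
  (hc x y).elim fun w => (walk_diff_bound w).1

/-- Betweenness in a partial cube is coordinatewise betweenness. -/
lemma btw_iff {V : Set (Λ → Bool)} (hV : IsPartialCube V) (u w v : ↥V) :
    (pcGraph V).dist u w + (pcGraph V).dist w v = (pcGraph V).dist u v ↔
      ∀ g, (u : Λ → Bool) g = (v : Λ → Bool) g →
        (w : Λ → Bool) g = (u : Λ → Bool) g := by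
  have hA := diff_finite hV.1 u w
  have hB := diff_finite hV.1 w v
  rw [hV.2 u w, hV.2 w v, hV.2 u v]
  constructor
  · intro h g hg
    by_contra hwg
    have hsub : {g | (u : Λ → Bool) g ≠ (v : Λ → Bool) g} ⊆
        {g | (u : Λ → Bool) g ≠ (w : Λ → Bool) g} ∪
        {g | (w : Λ → Bool) g ≠ (v : Λ → Bool) g} := by
      intro g' hg'
      by_cases h1 : (u : Λ → Bool) g' = (w : Λ → Bool) g'
      · exact Or.inr (by rw [Set.mem_setOf_eq, ← h1]; exact hg')
      · exact Or.inl h1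
    have hss : {g | (u : Λ → Bool) g ≠ (v : Λ → Bool) g} ⊂
        {g | (u : Λ → Bool) g ≠ (w : Λ → Bool) g} ∪
        {g | (w : Λ → Bool) g ≠ (v : Λ → Bool) g} := by
      refine ⟨hsub, fun hsup => ?_⟩
      have hgmem : g ∈ {g | (u : Λ → Bool) g ≠ (w : Λ → Bool) g} ∪
          {g | (w : Λ → Bool) g ≠ (v : Λ → Bool) g} :=
        Or.inl (fun e => hwg e.symm)
      exact (hsup hgmem) hg
    have h1 := Set.ncard_lt_ncard hss (hA.union hB)
    have h2 := Set.ncard_union_le {g | (u : Λ → Bool) g ≠ (w : Λ → Bool) g}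
      {g | (w : Λ → Bool) g ≠ (v : Λ → Bool) g}
    omega
  · intro hbtw
    have hdisj : Disjoint {g | (u : Λ → Bool) g ≠ (w : Λ → Bool) g}
        {g | (w : Λ → Bool) g ≠ (v : Λ → Bool) g} := by
      rw [Set.disjoint_left]
      intro g h1 h2
      rw [Set.mem_setOf_eq] at h1 h2
      by_cases huv : (u : Λ → Bool) g = (v : Λ → Bool) g
      · exact h1 (hbtw g huv).symm
      · exact h2 (bool_resolve huv (Ne.symm h1))
    have hunion : {g | (u : Λ → Bool) g ≠ (w : Λ → Bool) g} ∪
        {g | (w : Λ → Bool) g ≠ (v : Λ → Bool) g} =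
        {g | (u : Λ → Bool) g ≠ (v : Λ → Bool) g} := by
      ext g
      simp only [Set.mem_union, Set.mem_setOf_eq]
      constructor
      · rintro (h1 | h1)
        · intro huv; exact h1 (hbtw g huv).symm
        · intro huv; exact h1 (by rw [hbtw g huv, huv])
      · intro huv
        by_cases h1 : (u : Λ → Bool) g = (w : Λ → Bool) g
        · exact Or.inr (by rw [← h1]; exact huv)
        · exact Or.inl h1
    rw [← hunion, Set.ncard_union_eq hdisj hA hB]

end Stmt10Aux

namespace Stmt10Aux

open SimpleGraph

variable {Λ : Type*}

lemma contr_mem {V : Set (Λ → Bool)} (f : Λ) (x : ↥V) :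
    contr f ↑x ∈ contr f '' V := ⟨↑x, x.2, rfl⟩

lemma proj_walk {V : Set (Λ → Bool)} (f : Λ) :
    ∀ {x y : ↥V} (w : (pcGraph V).Walk x y),
      ∃ w' : (pcGraph (contr f '' V)).Walk ⟨contr f ↑x, contr_mem f x⟩
          ⟨contr f ↑y, contr_mem f y⟩,
        w'.length + (if (x : Λ → Bool) f = (y : Λ → Bool) f then 0 else 1) ≤ w.length := by
  intro x y w
  induction w with
  | nil => exact ⟨Walk.nil, by simp⟩
  | @cons x z y h w ih =>
    obtain ⟨g₀, hg₀, hrest⟩ := pc_adj.1 h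
    obtain ⟨w', hw'⟩ := ih
    by_cases hg₀f : g₀ = f
    · subst hg₀f
      have hxz : contr g₀ (↑x : Λ → Bool) = contr g₀ (↑z : Λ → Bool) :=
        funext fun g => hrest g.1 g.2
      refine ⟨w'.copy (Subtype.ext hxz.symm) rfl, ?_⟩
      rw [Walk.length_copy, Walk.length_cons]
      by_cases hxy : (x : Λ → Bool) g₀ = (y : Λ → Bool) g₀
      · have hzy : ¬ (z : Λ → Bool) g₀ = (y : Λ → Bool) g₀ := by
          intro e; exact hg₀ (by rw [hxy, e])
        simp only [if_pos hxy, if_neg hzy] at *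
        omega
      · have h0 : w'.length + 0 ≤ w'.length +
            (if (z : Λ → Bool) g₀ = (y : Λ → Bool) g₀ then 0 else 1) := by
          split <;> omega
        simp only [if_neg hxy]
        omega
    · have hadj : (pcGraph (contr f '' V)).Adj ⟨contr f ↑x, contr_mem f x⟩
          ⟨contr f ↑z, contr_mem f z⟩ :=
        ⟨⟨g₀, hg₀f⟩, hg₀, fun g hg => hrest g.1 fun e => hg (Subtype.ext e)⟩
      refine ⟨Walk.cons hadj w', ?_⟩
      rw [Walk.length_cons, Walk.length_cons]
      have hxzf : (x : Λ → Bool) f = (z : Λ → Bool) f := hrest f fun e => hg₀f e.symm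
      rw [hxzf]
      omega

lemma contr_connected {V : Set (Λ → Bool)} (hc : (pcGraph V).Connected) (f : Λ) :
    (pcGraph (contr f '' V)).Connected := by
  have hne : Nonempty ↥V := hc.nonempty
  obtain ⟨x₀⟩ := hne
  have hpre : (pcGraph (contr f '' V)).Preconnected := by
    intro a b
    obtain ⟨xa, hxa, hxa'⟩ := a.2
    obtain ⟨xb, hxb, hxb'⟩ := b.2
    obtain ⟨w⟩ := hc ⟨xa, hxa⟩ ⟨xb, hxb⟩
    obtain ⟨w', -⟩ := proj_walk f w
    have ha : a = ⟨contr f xa, contr_mem f ⟨xa, hxa⟩⟩ := Subtype.ext hxa'.symm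
    have hb : b = ⟨contr f xb, contr_mem f ⟨xb, hxb⟩⟩ := Subtype.ext hxb'.symm
    rw [ha, hb]
    exact ⟨w'⟩
  haveI : Nonempty ↥(contr f '' V) := ⟨⟨contr f ↑x₀, contr_mem f x₀⟩⟩
  exact ⟨hpre⟩

lemma ncard_diff_contr {V : Set (Λ → Bool)} (f : Λ) (x y : ↥V)
    (hfin : {g | (x : Λ → Bool) g ≠ (y : Λ → Bool) g}.Finite) :
    {g | (x : Λ → Bool) g ≠ (y : Λ → Bool) g}.ncard =
      {g : {g : Λ // g ≠ f} | contr f (↑x : Λ → Bool) g ≠ contr f (↑y : Λ → Bool) g}.ncard +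
      (if (x : Λ → Bool) f = (y : Λ → Bool) f then 0 else 1) := by
  have himg : Subtype.val '' {g : {g : Λ // g ≠ f} |
      contr f (↑x : Λ → Bool) g ≠ contr f (↑y : Λ → Bool) g} =
      {g | g ≠ f ∧ (x : Λ → Bool) g ≠ (y : Λ → Bool) g} := by
    ext g
    constructor
    · rintro ⟨⟨g', hg'⟩, hmem, rfl⟩; exact ⟨hg', hmem⟩
    · rintro ⟨h1, h2⟩; exact ⟨⟨g, h1⟩, h2, rfl⟩
  have hcard : {g : {g : Λ // g ≠ f} |
      contr f (↑x : Λ → Bool) g ≠ contr f (↑y : Λ → Bool) g}.ncard =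
      {g | g ≠ f ∧ (x : Λ → Bool) g ≠ (y : Λ → Bool) g}.ncard := by
    rw [← himg, Set.ncard_image_of_injective _ Subtype.val_injective]
  rw [hcard]
  by_cases hxy : (x : Λ → Bool) f = (y : Λ → Bool) f
  · rw [if_pos hxy]
    have : {g | (x : Λ → Bool) g ≠ (y : Λ → Bool) g} =
        {g | g ≠ f ∧ (x : Λ → Bool) g ≠ (y : Λ → Bool) g} := by
      ext g
      simp only [Set.mem_setOf_eq, iff_and_self]
      intro hg he; subst he; exact hg hxy
    rw [this, Nat.add_zero]
  · rw [if_neg hxy]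
    have : {g | (x : Λ → Bool) g ≠ (y : Λ → Bool) g} =
        insert f {g | g ≠ f ∧ (x : Λ → Bool) g ≠ (y : Λ → Bool) g} := by
      ext g
      simp only [Set.mem_setOf_eq, Set.mem_insert_iff]
      constructor
      · intro hg
        by_cases he : g = f
        · exact Or.inl he
        · exact Or.inr ⟨he, hg⟩
      · rintro (rfl | ⟨-, hg⟩)
        · exact hxy
        · exact hg
    rw [this, Set.ncard_insert_of_notMem (fun h => h.1 rfl)
      (hfin.subset (fun g hg => hg.2))]

lemma contr_pc {V : Set (Λ → Bool)} (hV : IsPartialCube V) (f : Λ) :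
    IsPartialCube (contr f '' V) := by
  have hconn := contr_connected hV.1 f
  refine ⟨hconn, fun a b => ?_⟩
  obtain ⟨xa, hxa, hxa'⟩ := a.2
  obtain ⟨xb, hxb, hxb'⟩ := b.2
  set x : ↥V := ⟨xa, hxa⟩
  set y : ↥V := ⟨xb, hxb⟩
  have ha : a = ⟨contr f ↑x, contr_mem f x⟩ := Subtype.ext hxa'.symm
  have hb : b = ⟨contr f ↑y, contr_mem f y⟩ := Subtype.ext hxb'.symm
  subst ha; subst hb
  -- lower bound
  obtain ⟨wab, hwab⟩ := hconn.exists_walk_length_eq_dist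
    (⟨contr f ↑x, contr_mem f x⟩ : ↥(contr f '' V)) ⟨contr f ↑y, contr_mem f y⟩
  have hge : {g : {g : Λ // g ≠ f} | contr f (↑x : Λ → Bool) g ≠ contr f (↑y : Λ → Bool) g}.ncard
      ≤ wab.length := (walk_diff_bound wab).2
  -- upper bound
  obtain ⟨w, hw⟩ := hV.1.exists_walk_length_eq_dist x y
  obtain ⟨w', hw'⟩ := proj_walk f w
  have hdist := hV.2 x y
  have hfin := diff_finite hV.1 x y
  have hkey := ncard_diff_contr f x y hfin
  have hle : (pcGraph (contr f '' V)).dist ⟨contr f ↑x, contr_mem f x⟩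
      ⟨contr f ↑y, contr_mem f y⟩ ≤ w'.length := SimpleGraph.dist_le w'
  show _ = {g : {g : Λ // g ≠ f} | contr f (↑x : Λ → Bool) g ≠ contr f (↑y : Λ → Bool) g}.ncard
  omega

end Stmt10Aux

namespace Stmt10Aux

open SimpleGraph

variable {Λ : Type*}

/-- On a geodesic between `a` and `c` with `a f ≠ c f` there is an `f`-edge `u ~ v`
with both ends between `a` and `c`. -/
lemma fedge {V : Set (Λ → Bool)} (hV : IsPartialCube V) (f : Λ) (c : ↥V) :
    ∀ (n : ℕ) (a : ↥V), {g | (a : Λ → Bool) g ≠ (c : Λ → Bool) g}.ncard ≤ n →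
      (a : Λ → Bool) f ≠ (c : Λ → Bool) f →
      ∃ u v : ↥V, (u : Λ → Bool) f = (a : Λ → Bool) f ∧
        (v : Λ → Bool) f = (c : Λ → Bool) f ∧
        (∀ g, g ≠ f → (u : Λ → Bool) g = (v : Λ → Bool) g) ∧
        (∀ g, (a : Λ → Bool) g = (c : Λ → Bool) g →
          (u : Λ → Bool) g = (a : Λ → Bool) g ∧ (v : Λ → Bool) g = (a : Λ → Bool) g) := by
  intro n
  induction n with
  | zero =>
    intro a hn hf
    exfalso
    have hfin := diff_finite hV.1 a c
    have hmem : f ∈ {g | (a : Λ → Bool) g ≠ (c : Λ → Bool) g} := hf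
    have hpos : 0 < {g | (a : Λ → Bool) g ≠ (c : Λ → Bool) g}.ncard :=
      (Set.ncard_pos hfin).2 ⟨f, hmem⟩
    omega
  | succ n ih =>
    intro a hn hf
    have hfin := diff_finite hV.1 a c
    obtain ⟨w, hw⟩ := hV.1.exists_walk_length_eq_dist a c
    have hwlen : w.length = {g | (a : Λ → Bool) g ≠ (c : Λ → Bool) g}.ncard := by
      rw [hw, hV.2 a c]
    cases w with
    | nil => exact absurd rfl hf
    | @cons _ z _ h p =>
      obtain ⟨g₀, hg₀, hrest⟩ := pc_adj.1 h
      have hpb := walk_diff_bound p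
      have h3 : p.length + 1 = {g | (a : Λ → Bool) g ≠ (c : Λ → Bool) g}.ncard := by
        simpa using hwlen
      have hg₀ac : (a : Λ → Bool) g₀ ≠ (c : Λ → Bool) g₀ := by
        intro he
        have hsub : {g | (a : Λ → Bool) g ≠ (c : Λ → Bool) g} ⊆
            {g | (z : Λ → Bool) g ≠ (c : Λ → Bool) g} := by
          intro g hg
          have hgne : g ≠ g₀ := by rintro rfl; exact hg he
          rw [Set.mem_setOf_eq, ← hrest g hgne]; exact hg
        have h1 := Set.ncard_le_ncard hsub hpb.1
        have h2 := hpb.2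
        omega
      have hzg₀ : (z : Λ → Bool) g₀ = (c : Λ → Bool) g₀ := bool_resolve hg₀ac (Ne.symm hg₀)
      by_cases hg₀f : g₀ = f
      · subst hg₀f
        refine ⟨a, z, rfl, hzg₀, fun g hg => hrest g hg, fun g hg => ⟨rfl, ?_⟩⟩
        exact (hrest g fun e => hf (e ▸ hg)).symm
      · have hzf : (z : Λ → Bool) f = (a : Λ → Bool) f :=
          (hrest f fun e => hg₀f e.symm).symm
        have hdiffz : {g | (z : Λ → Bool) g ≠ (c : Λ → Bool) g} =
            {g | (a : Λ → Bool) g ≠ (c : Λ → Bool) g} \ {g₀} := by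
          ext g
          by_cases hgg : g = g₀
          · subst hgg
            simp [hzg₀]
          · simp only [Set.mem_setOf_eq, Set.mem_diff, Set.mem_singleton_iff,
              ← hrest g hgg]
            exact ⟨fun hh => ⟨hh, hgg⟩, fun hh => hh.1⟩
        have hncard : {g | (z : Λ → Bool) g ≠ (c : Λ → Bool) g}.ncard ≤ n := by
          rw [hdiffz, Set.ncard_diff_singleton_of_mem (show g₀ ∈ {g | (a : Λ → Bool) g ≠ (c : Λ → Bool) g} from hg₀ac)]
          omega
        obtain ⟨u, v, h1, h2, hgood, h4⟩ := ih z hncard (by rw [hzf]; exact hf)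
        refine ⟨u, v, by rw [h1, hzf], h2, hgood, fun g hg => ?_⟩
        have hgg₀ : g ≠ g₀ := fun e => hg₀ac (e ▸ hg)
        have hzg : (z : Λ → Bool) g = (a : Λ → Bool) g := (hrest g hgg₀).symm
        obtain ⟨e1, e2⟩ := h4 g (by rw [hzg]; exact hg)
        exact ⟨by rw [e1, hzg], by rw [e2, hzg]⟩

lemma convex_coord {V : Set (Λ → Bool)} (hV : IsPartialCube V) {H : Set (Λ → Bool)}
    (hH : ConvexIn V H) (x y z : ↥V) (hx : (x : Λ → Bool) ∈ H) (hy : (y : Λ → Bool) ∈ H)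
    (h : ∀ g, (x : Λ → Bool) g = (y : Λ → Bool) g →
      (z : Λ → Bool) g = (x : Λ → Bool) g) :
    (z : Λ → Bool) ∈ H :=
  hH.2 x y z hx hy ((btw_iff hV x z y).2 h)

lemma main_step {V : Set (Λ → Bool)} (hV : IsPartialCube V) {H : Set (Λ → Bool)}
    (hH : ConvexIn V H) (f : Λ) {s t : Λ → Bool} (hs : s ∈ H) (ht : t ∈ H)
    (hst : s f ≠ t f) :
    ∀ (n : ℕ) (a b c : ↥V), (a : Λ → Bool) ∈ H → (b : Λ → Bool) ∈ H →
      {g | g ≠ f ∧ (a : Λ → Bool) g ≠ (c : Λ → Bool) g}.ncard ≤ n →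
      (∀ g, g ≠ f → (a : Λ → Bool) g = (b : Λ → Bool) g →
        (c : Λ → Bool) g = (a : Λ → Bool) g) →
      (c : Λ → Bool) ∈ H := by
  intro n
  induction n using Nat.strong_induction_on with
  | _ n ih =>
    intro a b c ha hb hn hbtw
    by_cases hab : (a : Λ → Bool) f = (b : Λ → Bool) f
    · by_cases hcf : (c : Λ → Bool) f = (a : Λ → Bool) f
      · refine convex_coord hV hH a b c ha hb fun g hg => ?_
        by_cases hgf : g = f
        · subst hgf; exact hcf
        · exact hbtw g hgf hg
      · -- a f = b f ≠ c f
        have hacf : (a : Λ → Bool) f ≠ (c : Λ → Bool) f := fun e => hcf e.symm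
        obtain ⟨t₀, ht₀H, ht₀f⟩ : ∃ t₀, t₀ ∈ H ∧ t₀ f = (c : Λ → Bool) f := by
          by_cases hcs : (c : Λ → Bool) f = s f
          · exact ⟨s, hs, hcs.symm⟩
          · exact ⟨t, ht, (bool_resolve hst hcs).symm⟩
        obtain ⟨u, v, huf, hvf, huv, hbet⟩ :=
          fedge hV f c ({g | (a : Λ → Bool) g ≠ (c : Λ → Bool) g}.ncard) a le_rfl hacf
        by_cases hu : ∀ g, g ≠ f → (u : Λ → Bool) g = (a : Λ → Bool) g
        · have ht₀V : t₀ ∈ V := hH.1 ht₀H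
          have hvH : (v : Λ → Bool) ∈ H := by
            refine convex_coord hV hH a ⟨t₀, ht₀V⟩ v ha ht₀H fun g hg => ?_
            by_cases hgf : g = f
            · subst hgf; exact absurd (hg.trans ht₀f) hacf
            · exact ((huv g hgf).symm).trans (hu g hgf)
          refine convex_coord hV hH v b c hvH hb fun g hg => ?_
          by_cases hgf : g = f
          · subst hgf; exact hvf.symm
          · have hva : (v : Λ → Bool) g = (a : Λ → Bool) g :=
              ((huv g hgf).symm).trans (hu g hgf)
            rw [hva]
            exact hbtw g hgf (by rw [← hva, hg])
        · push_neg at hu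
          obtain ⟨g₀, hg₀f, hg₀⟩ := hu
          have hag₀c : (a : Λ → Bool) g₀ ≠ (c : Λ → Bool) g₀ := fun e => hg₀ (hbet g₀ e).1
          have huH : (u : Λ → Bool) ∈ H := by
            refine convex_coord hV hH a b u ha hb fun g hg => ?_
            by_cases hgf : g = f
            · subst hgf; exact huf
            · by_contra h'
              have hac : (a : Λ → Bool) g ≠ (c : Λ → Bool) g := fun e => h' (hbet g e).1
              exact hac (hbtw g hgf hg).symm
          have hsub : {g | g ≠ f ∧ (u : Λ → Bool) g ≠ (c : Λ → Bool) g} ⊆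
              {g | g ≠ f ∧ (a : Λ → Bool) g ≠ (c : Λ → Bool) g} := by
            rintro g ⟨hgf, hgc⟩
            refine ⟨hgf, fun e => hgc ?_⟩
            rw [(hbet g e).1, e]
          have hfinA : {g | g ≠ f ∧ (a : Λ → Bool) g ≠ (c : Λ → Bool) g}.Finite :=
            (diff_finite hV.1 a c).subset fun g hg => hg.2
          have hstrict : {g | g ≠ f ∧ (u : Λ → Bool) g ≠ (c : Λ → Bool) g} ⊂
              {g | g ≠ f ∧ (a : Λ → Bool) g ≠ (c : Λ → Bool) g} := by
            refine ⟨hsub, fun hsup => ?_⟩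
            have hmem : g₀ ∈ {g | g ≠ f ∧ (a : Λ → Bool) g ≠ (c : Λ → Bool) g} :=
              ⟨hg₀f, hag₀c⟩
            exact (hsup hmem).2 (bool_resolve hag₀c hg₀)
          have hlt := Set.ncard_lt_ncard hstrict hfinA
          have hbtw' : ∀ g, g ≠ f → (u : Λ → Bool) g = (b : Λ → Bool) g →
              (c : Λ → Bool) g = (u : Λ → Bool) g := by
            intro g hgf hg
            by_cases hac : (a : Λ → Bool) g = (c : Λ → Bool) g
            · rw [(hbet g hac).1]; exact hac.symm
            · by_cases hua : (u : Λ → Bool) g = (a : Λ → Bool) g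
              · exact absurd (hbtw g hgf (hua.symm.trans hg)).symm hac
              · exact (bool_resolve hac hua).symm
          exact ih _ (lt_of_lt_of_le hlt hn) u b c huH hb le_rfl hbtw'
    · refine convex_coord hV hH a b c ha hb fun g hg => ?_
      by_cases hgf : g = f
      · subst hgf; exact absurd hg hab
      · exact hbtw g hgf hg

end Stmt10Aux

open Stmt10Aux in
/-- `π_f(conv(S)) ⊆ conv(π_f(S))`; if moreover `E_f` crosses `S`, equality holds. -/
theorem stmt10 (V S : Set (Λ → Bool)) (hV : IsPartialCube V) (hS : S ⊆ V) (f : Λ) :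
    contr f '' convexHullIn V S ⊆ convexHullIn (contr f '' V) (contr f '' S) ∧
    (Crosses f S →
      contr f '' convexHullIn V S = convexHullIn (contr f '' V) (contr f '' S)) := by
  classical
  have hV' := contr_pc hV f
  have part1 : contr f '' convexHullIn V S ⊆
      convexHullIn (contr f '' V) (contr f '' S) := by
    rintro y ⟨x, hxH, rfl⟩
    simp only [convexHullIn, Set.mem_sInter, Set.mem_setOf_eq]
    rintro W' ⟨hW'c, hW's⟩
    set W : Set (Λ → Bool) := {z | z ∈ V ∧ contr f z ∈ W'} with hWdef
    have hWconv : ConvexIn V W := by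
      refine ⟨fun z hz => hz.1, fun u v w hu hv hd => ?_⟩
      refine ⟨w.2, ?_⟩
      have hbtw := (btw_iff hV u w v).1 hd
      have hd' := (btw_iff hV' ⟨contr f ↑u, contr_mem f u⟩ ⟨contr f ↑w, contr_mem f w⟩
        ⟨contr f ↑v, contr_mem f v⟩).2 (fun g hg => hbtw g.1 hg)
      exact hW'c.2 ⟨contr f ↑u, contr_mem f u⟩ ⟨contr f ↑v, contr_mem f v⟩
        ⟨contr f ↑w, contr_mem f w⟩ hu.2 hv.2 hd'
    have hSW : S ⊆ W := fun z hz => ⟨hS hz, hW's ⟨z, hz, rfl⟩⟩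
    exact (Set.mem_sInter.1 hxH W ⟨hWconv, hSW⟩).2
  refine ⟨part1, fun hcross => Set.Subset.antisymm part1 ?_⟩
  set H := convexHullIn V S with hHdef
  have hSH : S ⊆ H := fun x hx => Set.mem_sInter.2 fun W hW => hW.2 hx
  have hVfam : ConvexIn V V := ⟨Set.Subset.rfl, fun u v w _ _ _ => w.2⟩
  have hHV : H ⊆ V := fun x hx => Set.mem_sInter.1 hx V ⟨hVfam, hS⟩
  have hHconv : ConvexIn V H :=
    ⟨hHV, fun u v w hu hv hd => Set.mem_sInter.2 fun W hW =>
      hW.1.2 u v w (Set.mem_sInter.1 hu W hW) (Set.mem_sInter.1 hv W hW) hd⟩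
  obtain ⟨⟨s, hsS, hsf⟩, ⟨t, htS, htf⟩⟩ := hcross
  have hst : s f ≠ t f := by rw [hsf, htf]; simp
  intro y hy
  have himg : ConvexIn (contr f '' V) (contr f '' H) := by
    refine ⟨Set.image_mono hHV, fun u' v' w' hu' hv' hd' => ?_⟩
    obtain ⟨a, haH, hau⟩ := hu'
    obtain ⟨b, hbH, hbv⟩ := hv'
    obtain ⟨cc, hcV, hcw⟩ := w'.2
    have hbtw := (btw_iff hV' u' w' v').1 hd'
    have hbtw2 : ∀ g, g ≠ f → a g = b g → cc g = a g := by
      intro g hgf hg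
      have e1 : (↑u' : {g : Λ // g ≠ f} → Bool) ⟨g, hgf⟩ = a g :=
        (congrFun hau ⟨g, hgf⟩).symm
      have e2 : (↑v' : {g : Λ // g ≠ f} → Bool) ⟨g, hgf⟩ = b g :=
        (congrFun hbv ⟨g, hgf⟩).symm
      have e3 : (↑w' : {g : Λ // g ≠ f} → Bool) ⟨g, hgf⟩ = cc g :=
        (congrFun hcw ⟨g, hgf⟩).symm
      have := hbtw ⟨g, hgf⟩ (e1.trans (hg.trans e2.symm))
      exact e3.symm.trans (this.trans e1)
    have hres := main_step hV hHconv f (hSH hsS) (hSH htS) hst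
      ({g | g ≠ f ∧ a g ≠ cc g}.ncard) ⟨a, hHV haH⟩ ⟨b, hHV hbH⟩ ⟨cc, hcV⟩
      haH hbH le_rfl hbtw2
    exact ⟨cc, hres, hcw⟩
  exact Set.mem_sInter.1 hy (contr f '' H) ⟨himg, Set.image_mono hSH⟩
end

section
/- If S is an antipodal subgraph of a partial cube G and the Θ-class E_f crosses S or is disjoint from S, then π_f(S) is an antipodal subgraph of π_f(G). -/
variable {Λ : Type*}

/-- `S` is an antipodal subgraph of the partial cube on `V`. -/
def AntipodalIn (V S : Set (Λ → Bool)) : Prop :=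
  S ⊆ V ∧ ∀ x ∈ S, ∃ y ∈ S, S = convexHullIn V {x, y}

section Aux

open SimpleGraph Set

/-- The Hamming difference set. -/
def Ham (x y : Λ → Bool) : Set Λ := {g | x g ≠ y g}

lemma ham_adj {x y : Λ → Bool} (h : (Qcube Λ).Adj x y) : ∃ f, Ham x y ⊆ {f} ∧ x f ≠ y f := by
  obtain ⟨f, hf, hall⟩ := h
  refine ⟨f, fun g hg => ?_, hf⟩
  by_contra hne
  exact hg (hall g hne)

lemma walk_bound {V : Set (Λ → Bool)} {a b : V} (W : (pcGraph V).Walk a b) :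
    (Ham a.1 b.1).Finite ∧ (Ham a.1 b.1).ncard ≤ W.length := by
  induction W with
  | nil =>
    rename_i u
    have he : Ham u.1 u.1 = ∅ := by ext g; simp [Ham]
    rw [he]; simp
  | @cons u c v h p ih =>
    obtain ⟨f, hsub, -⟩ := ham_adj (h : (Qcube Λ).Adj u.1 c.1)
    have hsub2 : Ham u.1 v.1 ⊆ {f} ∪ Ham c.1 v.1 := by
      intro g hg
      by_cases hgc : u.1 g = c.1 g
      · exact Or.inr (fun he => hg (hgc.trans he))
      · exact Or.inl (hsub hgc)
    have hfin2 : ({f} ∪ Ham c.1 v.1 : Set Λ).Finite := (Set.finite_singleton f).union ih.1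
    have hfin : (Ham u.1 v.1).Finite := hfin2.subset hsub2
    refine ⟨hfin, ?_⟩
    have h1 : (Ham u.1 v.1).ncard ≤ ({f} ∪ Ham c.1 v.1 : Set Λ).ncard :=
      Set.ncard_le_ncard hsub2 hfin2
    have h2 := Set.ncard_union_le ({f} : Set Λ) (Ham c.1 v.1)
    have h3 := ih.2
    simp only [Set.ncard_singleton] at h2
    simp only [Walk.length_cons]
    omega

lemma ham_ncard_le_dist {V : Set (Λ → Bool)} (h : (pcGraph V).Connected) (a b : V) :
    (Ham a.1 b.1).Finite ∧ (Ham a.1 b.1).ncard ≤ (pcGraph V).dist a b := by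
  obtain ⟨p, hp⟩ := h.exists_walk_length_eq_dist a b
  exact hp ▸ walk_bound p

lemma ham_arith (x w y : Λ → Bool) (hA : (Ham x w).Finite) (hB : (Ham w y).Finite) :
    ((Ham x w).ncard + (Ham w y).ncard = (Ham x y).ncard ↔ ∀ g, x g = y g → w g = x g) := by
  have hU : Ham x w ∪ Ham w y = Ham x y ∪ (Ham x w ∩ Ham w y) := by
    ext g
    simp only [Ham, mem_union, mem_inter_iff, mem_setOf_eq]
    cases hx : x g <;> cases hw : w g <;> cases hy : y g <;> simp
  have hd : Disjoint (Ham x y) (Ham x w ∩ Ham w y) := by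
    rw [Set.disjoint_left]
    intro g hgC hgI
    simp only [Ham, mem_inter_iff, mem_setOf_eq] at hgC hgI
    cases hx : x g <;> cases hw : w g <;> cases hy : y g <;> simp_all
  have hCfin : (Ham x y).Finite := (hA.union hB).subset (hU ▸ Set.subset_union_left)
  have hIfin : (Ham x w ∩ Ham w y).Finite := hA.inter_of_left _
  have key : (Ham x w).ncard + (Ham w y).ncard
      = (Ham x y).ncard + 2 * (Ham x w ∩ Ham w y).ncard := by
    have h1 := Set.ncard_union_add_ncard_inter (Ham x w) (Ham w y) hA hB
    have h2 := Set.ncard_union_eq hd hCfin hIfin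
    rw [hU] at h1
    omega
  constructor
  · intro h g hxy
    have h0 : (Ham x w ∩ Ham w y).ncard = 0 := by omega
    have hIe : Ham x w ∩ Ham w y = ∅ := (Set.ncard_eq_zero hIfin).mp h0
    by_contra hwg
    have hmem : g ∈ Ham x w ∩ Ham w y := by
      constructor
      · exact fun e => hwg e.symm
      · exact fun e => hwg (hxy ▸ e)
    rw [hIe] at hmem
    exact hmem
  · intro h
    have hIe : Ham x w ∩ Ham w y = ∅ := by
      ext g
      simp only [mem_inter_iff, mem_empty_iff_false, iff_false, not_and]
      intro h1 h2
      have hxy : x g = y g := by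
        simp only [Ham, mem_setOf_eq] at h1 h2
        cases hx : x g <;> cases hw : w g <;> cases hy : y g <;> simp_all
      exact h1 ((h g hxy).symm)
    rw [hIe] at key
    simp only [Set.ncard_empty, Nat.mul_zero, Nat.add_zero] at key
    omega

lemma interval_iff {V : Set (Λ → Bool)} (hV : IsPartialCube V) (x w y : V) :
    (pcGraph V).dist x w + (pcGraph V).dist w y = (pcGraph V).dist x y ↔
      ∀ g, (x : Λ → Bool) g = (y : Λ → Bool) g → (w : Λ → Bool) g = (x : Λ → Bool) g := by
  rw [hV.2, hV.2, hV.2]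
  exact ham_arith x.1 w.1 y.1 (ham_ncard_le_dist hV.1 x w).1 (ham_ncard_le_dist hV.1 w y).1

lemma hull_pair {V : Set (Λ → Bool)} (hV : IsPartialCube V) (x y : V) :
    convexHullIn V {x.1, y.1} = {w | w ∈ V ∧ ∀ g, x.1 g = y.1 g → w g = x.1 g} := by
  apply subset_antisymm
  · apply Set.sInter_subset_of_mem
    refine ⟨⟨fun w hw => hw.1, ?_⟩, ?_⟩
    · intro u v w hu hv hd
      refine ⟨w.2, fun g hxy => ?_⟩
      have hc := (interval_iff hV u w v).mp hd
      have h1 := hc g (by rw [hu.2 g hxy, hv.2 g hxy])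
      rw [h1, hu.2 g hxy]
    · rintro z (rfl | rfl)
      · exact ⟨x.2, fun g _ => rfl⟩
      · exact ⟨y.2, fun g h => h.symm⟩
  · rintro w ⟨hwV, hw⟩
    refine Set.mem_sInter.mpr ?_
    rintro W ⟨⟨hWV, hconv⟩, hxyW⟩
    refine hconv x y ⟨w, hwV⟩ (hxyW (Or.inl rfl)) (hxyW (Or.inr rfl)) ?_
    exact (interval_iff hV x ⟨w, hwV⟩ y).mpr hw

lemma contr_eq_of_f {f : Λ} {a b : Λ → Bool} (h : (Qcube Λ).Adj a b) (hf : a f ≠ b f) :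
    contr f a = contr f b := by
  obtain ⟨g, hg, hall⟩ := h
  have hgf : g = f := by
    by_contra hne
    exact hf (hall f (fun e => hne e.symm))
  subst hgf
  funext i
  exact hall i.1 i.2

lemma contr_adj {f : Λ} {a b : Λ → Bool} (h : (Qcube Λ).Adj a b) (hf : a f = b f) :
    (Qcube {g : Λ // g ≠ f}).Adj (contr f a) (contr f b) := by
  obtain ⟨g, hg, hall⟩ := h
  have hgf : g ≠ f := fun e => hg (e ▸ hf)
  refine ⟨⟨g, hgf⟩, hg, fun j hj => ?_⟩
  exact hall j.1 (fun e => hj (Subtype.ext e))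

/-- The canonical map to the contracted graph. -/
def cmap {V : Set (Λ → Bool)} (f : Λ) (a : V) : ↥(contr f '' V) :=
  ⟨contr f a.1, ⟨a.1, a.2, rfl⟩⟩

lemma proj_walk {V : Set (Λ → Bool)} (f : Λ) {a b : V} (W : (pcGraph V).Walk a b) :
    ∃ W' : (pcGraph (contr f '' V)).Walk (cmap f a) (cmap f b),
      W'.length + (if a.1 f = b.1 f then 0 else 1) ≤ W.length := by
  induction W with
  | nil => exact ⟨.nil, by simp⟩
  | @cons u c v h p ih =>
    obtain ⟨W', hW'⟩ := ih
    by_cases hf : u.1 f = c.1 f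
    · have hadj : (pcGraph (contr f '' V)).Adj (cmap f u) (cmap f c) :=
        contr_adj (h : (Qcube Λ).Adj u.1 c.1) hf
      refine ⟨.cons hadj W', ?_⟩
      simp only [Walk.length_cons]
      have hsw : (if u.1 f = v.1 f then 0 else 1) = (if c.1 f = v.1 f then 0 else 1) := by
        by_cases h2 : c.1 f = v.1 f
        · rw [if_pos h2, if_pos (hf.trans h2)]
        · rw [if_neg h2, if_neg (fun e => h2 (hf.symm.trans e))]
      omega
    · have heq : cmap f u = cmap f c :=
        Subtype.ext (contr_eq_of_f (h : (Qcube Λ).Adj u.1 c.1) hf)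
      refine ⟨W'.copy heq.symm rfl, ?_⟩
      rw [Walk.length_copy, Walk.length_cons]
      by_cases h2 : c.1 f = v.1 f
      · rw [if_neg (fun e => hf (e.trans h2.symm))]
        rw [if_pos h2] at hW'
        omega
      · have huv : u.1 f = v.1 f := by
          cases hu0 : u.1 f <;> cases hc0 : c.1 f <;> cases hv0 : v.1 f <;> simp_all
        rw [if_pos huv]
        rw [if_neg h2] at hW'
        omega

lemma ham_contr_eq (f : Λ) (x y : Λ → Bool) :
    Ham x y \ {f} = Subtype.val '' (Ham (contr f x) (contr f y)) := by
  ext g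
  simp only [Ham, contr, Set.mem_diff, Set.mem_image, Set.mem_setOf_eq, Set.mem_singleton_iff]
  constructor
  · rintro ⟨h1, h2⟩
    exact ⟨⟨g, h2⟩, h1, rfl⟩
  · rintro ⟨⟨g', hg'⟩, h1, rfl⟩
    exact ⟨h1, hg'⟩

lemma ncard_ham_contr (f : Λ) (x y : Λ → Bool) :
    (Ham (contr f x) (contr f y)).ncard = (Ham x y \ {f}).ncard := by
  rw [ham_contr_eq, Set.ncard_image_of_injective _ Subtype.val_injective]

lemma partialCube_contr {V : Set (Λ → Bool)} (hV : IsPartialCube V) (f : Λ) :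
    IsPartialCube (contr f '' V) := by
  obtain ⟨hconn, hdist⟩ := hV
  have hpre : (pcGraph (contr f '' V)).Preconnected := by
    intro x' y'
    obtain ⟨x, hx, hxe⟩ := x'.2
    obtain ⟨y, hy, hye⟩ := y'.2
    have hx' : x' = cmap f ⟨x, hx⟩ := Subtype.ext hxe.symm
    have hy' : y' = cmap f ⟨y, hy⟩ := Subtype.ext hye.symm
    rw [hx', hy']
    obtain ⟨p⟩ := hconn ⟨x, hx⟩ ⟨y, hy⟩
    obtain ⟨W', -⟩ := proj_walk f p
    exact ⟨W'⟩
  have hne : Nonempty ↥(contr f '' V) := by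
    obtain ⟨a⟩ := hconn.nonempty
    exact ⟨cmap f a⟩
  have hconn' : (pcGraph (contr f '' V)).Connected := by
    haveI := hne
    exact ⟨hpre⟩
  refine ⟨hconn', ?_⟩
  intro x' y'
  obtain ⟨x, hx, hxe⟩ := x'.2
  obtain ⟨y, hy, hye⟩ := y'.2
  have hx' : x' = cmap f ⟨x, hx⟩ := Subtype.ext hxe.symm
  have hy' : y' = cmap f ⟨y, hy⟩ := Subtype.ext hye.symm
  rw [hx', hy']
  show (pcGraph (contr f '' V)).dist (cmap f ⟨x, hx⟩) (cmap f ⟨y, hy⟩)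
      = (Ham (contr f x) (contr f y)).ncard
  refine le_antisymm ?_ ((ham_ncard_le_dist hconn' (cmap f ⟨x, hx⟩) (cmap f ⟨y, hy⟩)).2)
  obtain ⟨p, hp⟩ := hconn.exists_walk_length_eq_dist ⟨x, hx⟩ ⟨y, hy⟩
  obtain ⟨W', hW'⟩ := proj_walk f p
  have h1 := SimpleGraph.dist_le W'
  have h2 : p.length = (Ham x y).ncard := by
    rw [hp]
    exact hdist ⟨x, hx⟩ ⟨y, hy⟩
  have hfin : (Ham x y).Finite := (ham_ncard_le_dist hconn ⟨x, hx⟩ ⟨y, hy⟩).1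
  rw [ncard_ham_contr]
  by_cases hfxy : x f = y f
  · rw [if_pos (hfxy : (⟨x, hx⟩ : V).1 f = (⟨y, hy⟩ : V).1 f)] at hW'
    have hds : Ham x y \ {f} = Ham x y :=
      Set.diff_singleton_eq_self (fun hf0 => hf0 hfxy)
    rw [hds]
    omega
  · rw [if_neg (hfxy : ¬ (⟨x, hx⟩ : V).1 f = (⟨y, hy⟩ : V).1 f)] at hW'
    have hmem : f ∈ Ham x y := hfxy
    have h3 := Set.ncard_diff_singleton_add_one hmem hfin
    omega

lemma exists_penult {α : Type*} {G : SimpleGraph α} {a b : α} (p : G.Walk a b)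
    (h : p.length ≠ 0) :
    ∃ q, G.Adj q b ∧ ∃ p' : G.Walk a q, p'.length + 1 = p.length := by
  induction p with
  | nil => simp at h
  | @cons u c v hadj p ih =>
    by_cases hl : p.length = 0
    · clear ih h
      cases p with
      | nil => exact ⟨u, hadj, .nil, by simp⟩
      | cons h2 p2 => simp [Walk.length_cons] at hl
    · obtain ⟨q, hq, p', hp'⟩ := ih hl
      refine ⟨q, hq, .cons hadj p', ?_⟩
      simp only [Walk.length_cons]
      omega

end Aux

/-- If `S` is an antipodal subgraph of the partial cube on `V` and `E_f` crosses
`S` or is disjoint from `S`, then `π_f(S)` is antipodal in `π_f(G)`. -/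
theorem stmt12 (V S : Set (Λ → Bool)) (hV : IsPartialCube V) (hS : AntipodalIn V S)
    (f : Λ) (h : Crosses f S ∨ DisjointFrom f V S) :
    AntipodalIn (contr f '' V) (contr f '' S) := by
  obtain ⟨hSV, hanti⟩ := hS
  have hV' := partialCube_contr hV f
  have hconn := hV.1
  refine ⟨Set.image_mono hSV, ?_⟩
  rintro ξ ⟨x, hxS, rfl⟩
  obtain ⟨y, hyS, hSeq⟩ := hanti x hxS
  have hx : x ∈ V := hSV hxS
  have hy : y ∈ V := hSV hyS
  have hchar : S = {w | w ∈ V ∧ ∀ g, x g = y g → w g = x g} := by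
    rw [hSeq]
    exact hull_pair hV ⟨x, hx⟩ ⟨y, hy⟩
  -- key: any vertex of V matching the pattern off f lies in S
  have hkey : ∀ w ∈ V, (∀ g, g ≠ f → x g = y g → w g = x g) → w ∈ S := by
    intro w hwV hw
    rcases h with hcross | hdisj
    · -- crossing: f is a free coordinate
      have hf : x f ≠ y f := by
        intro hfe
        obtain ⟨⟨z1, hz1, hz1f⟩, ⟨z2, hz2, hz2f⟩⟩ := hcross
        rw [hchar] at hz1 hz2
        have e1 : x f = true := (hz1.2 f hfe).symm.trans hz1f
        have e2 : x f = false := (hz2.2 f hfe).symm.trans hz2f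
        rw [e1] at e2
        simp at e2
      rw [hchar]
      refine ⟨hwV, fun g hg => ?_⟩
      by_cases hgf : g = f
      · subst hgf; exact absurd hg hf
      · exact hw g hgf hg
    · -- disjoint case
      by_cases hf : x f = y f
      · by_cases hwf : w f = x f
        · rw [hchar]
          refine ⟨hwV, fun g hg => ?_⟩
          by_cases hgf : g = f
          · subst hgf; exact hwf
          · exact hw g hgf hg
        · exfalso
          -- nearest point in S to w
          obtain ⟨d, ⟨un, hunS, hund⟩, hmin⟩ := (Nat.lt_wfRel.wf).has_min
            {n | ∃ u : V, u.1 ∈ S ∧ (pcGraph V).dist ⟨w, hwV⟩ u = n} ⟨_, ⟨x, hx⟩, hxS, rfl⟩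
          have hunchar := (hchar ▸ hunS : un.1 ∈ {w | w ∈ V ∧ ∀ g, x g = y g → w g = x g})
          have hufx : un.1 f = x f := hunchar.2 f hf
          have hne : (⟨w, hwV⟩ : V) ≠ un := by
            intro he
            apply hwf
            have : (⟨w, hwV⟩ : V).1 f = x f := by rw [he]; exact hufx
            exact this
          have hd0 : d ≠ 0 := by
            intro h0
            subst h0
            exact hne (hconn.dist_eq_zero_iff.mp hund)
          obtain ⟨p, hp⟩ := hconn.exists_walk_length_eq_dist ⟨w, hwV⟩ un
          have hlp : p.length ≠ 0 := by rw [hp, hund]; exact hd0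
          obtain ⟨q, hq, p', hp'⟩ := exists_penult p hlp
          have hdq : (pcGraph V).dist ⟨w, hwV⟩ q ≤ d - 1 := by
            have := SimpleGraph.dist_le p'
            omega
          have htri := hconn.dist_triangle (u := (⟨w, hwV⟩ : V)) (v := q) (w := un)
          have hdqu : (pcGraph V).dist q un = 1 := SimpleGraph.dist_eq_one_iff_adj.mpr hq
          rw [hund, hdqu] at htri
          have hsum : (pcGraph V).dist ⟨w, hwV⟩ q + (pcGraph V).dist q un
              = (pcGraph V).dist ⟨w, hwV⟩ un := by
            rw [hdqu, hund]; omega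
          have hcondq := (interval_iff hV ⟨w, hwV⟩ q un).mp hsum
          have hq2 : (Qcube Λ).Adj q.1 un.1 := hq
          obtain ⟨g, hgne, hall⟩ := hq2
          by_cases hgf : g = f
          · subst hgf
            exact (hdisj q.1 q.2 un.1 un.2 hq hgne).2 hunS
          · have hqS : q.1 ∈ S := by
              rw [hchar]
              refine ⟨q.2, fun g' hg' => ?_⟩
              by_cases hgg : g' = g
              · subst hgg
                exfalso
                have h1 : un.1 g' = x g' := hunchar.2 g' hg'
                have h2 : w g' = x g' := hw g' hgf hg'
                have h3 : (⟨w, hwV⟩ : V).1 g' = un.1 g' := h2.trans h1.symm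
                exact hgne ((hcondq g' h3).trans (h2.trans h1.symm))
              · exact (hall g' hgg).trans (hunchar.2 g' hg')
            exact hmin _ ⟨q, hqS, rfl⟩
              (show (pcGraph V).dist ⟨w, hwV⟩ q < d by omega)
      · rw [hchar]
        refine ⟨hwV, fun g hg => ?_⟩
        by_cases hgf : g = f
        · subst hgf; exact absurd hg hf
        · exact hw g hgf hg
  refine ⟨contr f y, ⟨y, hyS, rfl⟩, ?_⟩
  apply subset_antisymm
  · -- π(S) ⊆ hull
    rintro _ ⟨w, hwS, rfl⟩
    refine Set.mem_sInter.mpr ?_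
    rintro W ⟨⟨hWV, hconv⟩, hxyW⟩
    rw [hchar] at hwS
    have hd : (pcGraph (contr f '' V)).dist (cmap f ⟨x, hx⟩) ⟨contr f w, ⟨w, hwS.1, rfl⟩⟩
        + (pcGraph (contr f '' V)).dist ⟨contr f w, ⟨w, hwS.1, rfl⟩⟩ (cmap f ⟨y, hy⟩)
        = (pcGraph (contr f '' V)).dist (cmap f ⟨x, hx⟩) (cmap f ⟨y, hy⟩) := by
      refine (interval_iff hV' (cmap f ⟨x, hx⟩) ⟨contr f w, ⟨w, hwS.1, rfl⟩⟩
        (cmap f ⟨y, hy⟩)).mpr ?_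
      intro g hg
      exact hwS.2 g.1 hg
    exact hconv (cmap f ⟨x, hx⟩) (cmap f ⟨y, hy⟩) ⟨contr f w, ⟨w, hwS.1, rfl⟩⟩
      (hxyW (Or.inl rfl)) (hxyW (Or.inr rfl)) hd
  · -- hull ⊆ π(S): π(S) is a convex set containing both points
    apply Set.sInter_subset_of_mem
    refine ⟨⟨Set.image_mono hSV, ?_⟩, ?_⟩
    · intro u v w huS hvS hd
      have hcond := (interval_iff hV' u w v).mp hd
      obtain ⟨uu, huu, huue⟩ := huS
      obtain ⟨vv, hvv, hvve⟩ := hvS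
      obtain ⟨ww, hwwV, hwwe⟩ := w.2
      refine ⟨ww, hkey ww hwwV ?_, hwwe⟩
      intro g hgf hg
      have h1 : uu g = x g := (hchar ▸ huu : uu ∈ {w | w ∈ V ∧ ∀ g, x g = y g → w g = x g}).2 g hg
      have h2 : vv g = x g := (hchar ▸ hvv : vv ∈ {w | w ∈ V ∧ ∀ g, x g = y g → w g = x g}).2 g hg
      have e1 : (u : {g : Λ // g ≠ f} → Bool) ⟨g, hgf⟩ = uu g := by rw [← huue]; rfl
      have e2 : (v : {g : Λ // g ≠ f} → Bool) ⟨g, hgf⟩ = vv g := by rw [← hvve]; rfl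
      have e3 : (w : {g : Λ // g ≠ f} → Bool) ⟨g, hgf⟩ = ww g := by rw [← hwwe]; rfl
      have hc := hcond ⟨g, hgf⟩ (by rw [e1, e2, h1, h2])
      rw [e3, e1] at hc
      rw [hc, h1]
    · rintro z (rfl | rfl)
      · exact ⟨x, hxS, rfl⟩
      · exact ⟨y, hyS, rfl⟩
end

section
/- If a partial cube G is a gated amalgam of two partial cubes G1 and G2 each of which excludes Q3⁻ (the 3-cube minus a vertex) as a pc-minor, then G also excludes Q3⁻ as a pc-minor. -/
variable {Λ : Type*}

/-- diff set -/
def dset (x y : Λ → Bool) : Set Λ := {f | x f ≠ y f}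

lemma dset_comm (x y : Λ → Bool) : dset x y = dset y x := by
  ext f; exact ne_comm

lemma dset_eq_empty_iff {x y : Λ → Bool} : dset x y = ∅ ↔ x = y := by
  constructor
  · intro h; funext f
    by_contra hf
    exact absurd h (Set.nonempty_iff_ne_empty.mp ⟨f, hf⟩)
  · rintro rfl; ext f; simp [dset]

lemma pc_adj {U : Set (Λ → Bool)} {x y : ↥U} :
    (pcGraph U).Adj x y ↔ ∃ f, (x : Λ → Bool) f ≠ (y : Λ → Bool) f ∧
      ∀ g, g ≠ f → (x : Λ → Bool) g = (y : Λ → Bool) g := Iff.rfl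

lemma adj_dset {U : Set (Λ → Bool)} {x y : ↥U} (h : (pcGraph U).Adj x y) :
    ∃ f, dset (x : Λ → Bool) y = {f} := by
  obtain ⟨f, hf, hg⟩ := h
  refine ⟨f, ?_⟩
  ext g
  simp only [dset, Set.mem_setOf_eq, Set.mem_singleton_iff]
  constructor
  · intro hgg; by_contra hne; exact hgg (hg g hne)
  · rintro rfl; exact hf

lemma dset_sub_union (x z y : Λ → Bool) : dset x y ⊆ dset x z ∪ dset z y := by
  intro f hf
  by_contra hc
  simp only [Set.mem_union, dset, Set.mem_setOf_eq, not_or, not_not] at hc hf ⊢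
  exact hf (hc.1.trans hc.2)

lemma walk_bound_s15 {U : Set (Λ → Bool)} {x y : ↥U} (w : (pcGraph U).Walk x y) :
    (dset (x : Λ → Bool) y).Finite ∧ (dset (x : Λ → Bool) y).ncard ≤ w.length := by
  induction w with
  | nil =>
    rw [dset_eq_empty_iff.mpr rfl]; simp
  | @cons a b c h p ih =>
    obtain ⟨f, hf⟩ := adj_dset h
    have hsub : dset (a : Λ → Bool) c ⊆ {f} ∪ dset (b : Λ → Bool) c := by
      have := dset_sub_union (a : Λ → Bool) b c
      rwa [hf] at this
    have hfin : ({f} ∪ dset (b : Λ → Bool) c).Finite :=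
      (Set.finite_singleton f).union ih.1
    constructor
    · exact hfin.subset hsub
    · calc (dset (a : Λ → Bool) c).ncard ≤ ({f} ∪ dset (b : Λ → Bool) c).ncard :=
            Set.ncard_le_ncard hsub hfin
        _ ≤ ({f} : Set Λ).ncard + (dset (b : Λ → Bool) c).ncard := Set.ncard_union_le _ _
        _ ≤ 1 + p.length := by
            rw [Set.ncard_singleton]; omega
        _ = (SimpleGraph.Walk.cons h p).length := by
            rw [SimpleGraph.Walk.length_cons]; omega

lemma reach_dset_finite {U : Set (Λ → Bool)} {x y : ↥U} (h : (pcGraph U).Reachable x y) :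
    (dset (x : Λ → Bool) y).Finite :=
  h.elim fun w => (walk_bound_s15 w).1

lemma dist_ge_ncard {U : Set (Λ → Bool)} {x y : ↥U} (h : (pcGraph U).Reachable x y) :
    (dset (x : Λ → Bool) y).ncard ≤ (pcGraph U).dist x y := by
  obtain ⟨w, hw⟩ := h.exists_walk_length_eq_dist
  exact hw ▸ (walk_bound_s15 w).2

/-- Hamming additivity iff pointwise betweenness. -/
lemma ham_add_iff {x g y : Λ → Bool} (h1 : (dset x g).Finite) (h2 : (dset g y).Finite) :
    (dset x g).ncard + (dset g y).ncard = (dset x y).ncard ↔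
      ∀ f, g f = x f ∨ g f = y f := by
  have hsub := dset_sub_union x g y
  constructor
  · intro hsum
    by_contra hc
    push_neg at hc
    obtain ⟨f0, hf1, hf2⟩ := hc
    have hf0 : f0 ∈ dset x g ∩ dset g y := ⟨Ne.symm hf1, hf2⟩
    have hf0C : f0 ∉ dset x y := by
      simp only [dset, Set.mem_setOf_eq, not_not]
      have : x f0 ≠ g f0 := Ne.symm hf1
      cases hxv : x f0 <;> cases hyv : y f0 <;> cases hgv : g f0 <;>
        simp_all
    have hCfin : (dset x y).Finite := (h1.union h2).subset hsub
    have : insert f0 (dset x y) ⊆ dset x g ∪ dset g y := by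
      intro a ha
      rcases Set.mem_insert_iff.mp ha with rfl | ha
      · exact Set.mem_union_left _ hf0.1
      · exact hsub ha
    have hle : (insert f0 (dset x y)).ncard ≤ (dset x g ∪ dset g y).ncard :=
      Set.ncard_le_ncard this (h1.union h2)
    rw [Set.ncard_insert_of_notMem hf0C hCfin] at hle
    have := Set.ncard_union_le (dset x g) (dset g y)
    omega
  · intro hb
    have hxg : dset x g ⊆ dset x y := by
      intro f hf
      rcases hb f with h | h
      · exact absurd h.symm hf
      · simp only [dset, Set.mem_setOf_eq] at hf ⊢
        rw [← h]; exact hf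
    have hgy : dset g y ⊆ dset x y := by
      intro f hf
      rcases hb f with h | h
      · simp only [dset, Set.mem_setOf_eq] at hf ⊢
        rw [← h]; exact hf
      · exact absurd h hf
    have hdisj : Disjoint (dset x g) (dset g y) := by
      rw [Set.disjoint_iff]
      intro f ⟨ha, hb'⟩
      rcases hb f with h | h
      · exact absurd h.symm ha
      · exact absurd h hb'
    have hunion : dset x g ∪ dset g y = dset x y :=
      Set.Subset.antisymm (Set.union_subset hxg hgy) hsub
    rw [← hunion, Set.ncard_union_eq hdisj h1 h2]

section PCV
variable {V : Set (Λ → Bool)}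

lemma pc_dset_finite (hV : IsPartialCube V) (x y : ↥V) : (dset (x : Λ → Bool) y).Finite :=
  reach_dset_finite (hV.1 x y)

lemma pc_dist_eq (hV : IsPartialCube V) (x y : ↥V) :
    (pcGraph V).dist x y = (dset (x : Λ → Bool) y).ncard := hV.2 x y

lemma pc_between_iff (hV : IsPartialCube V) (x g y : ↥V) :
    (pcGraph V).dist x g + (pcGraph V).dist g y = (pcGraph V).dist x y ↔
      ∀ f, (g : Λ → Bool) f = (x : Λ → Bool) f ∨ (g : Λ → Bool) f = (y : Λ → Bool) f := by
  rw [pc_dist_eq hV, pc_dist_eq hV, pc_dist_eq hV]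
  exact ham_add_iff (pc_dset_finite hV x g) (pc_dset_finite hV g y)

lemma pc_step (hV : IsPartialCube V) {x y : ↥V} (hne : x ≠ y) :
    ∃ z : ↥V, (pcGraph V).Adj x z ∧
      (pcGraph V).dist x z + (pcGraph V).dist z y = (pcGraph V).dist x y := by
  obtain ⟨p, hp⟩ := (hV.1 x y).exists_walk_length_eq_dist
  cases p with
  | nil => exact absurd rfl hne
  | cons h q =>
    rename_i z
    refine ⟨z, h, ?_⟩
    have h1 := hV.1.dist_triangle (u := x) (v := z) (w := y)
    have h2 : (pcGraph V).dist x z ≤ 1 := by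
      have := SimpleGraph.dist_le (SimpleGraph.Walk.cons h SimpleGraph.Walk.nil)
      simpa using this
    have h3 : (pcGraph V).dist z y ≤ q.length := SimpleGraph.dist_le q
    rw [SimpleGraph.Walk.length_cons] at hp
    omega

end PCV

/-- Transfer of dist along a graph isomorphism, given reachability. -/
lemma iso_dist {α β : Type*} {G : SimpleGraph α} {H : SimpleGraph β} (e : G ≃g H)
    {u v : α} (h : G.Reachable u v) : H.dist (e u) (e v) = G.dist u v := by
  apply le_antisymm
  · obtain ⟨w, hw⟩ := h.exists_walk_length_eq_dist
    have := SimpleGraph.dist_le (w.map e.toHom)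
    rwa [SimpleGraph.Walk.length_map, hw] at this
  · have hre : H.Reachable (e u) (e v) := h.map e.toHom
    obtain ⟨w, hw⟩ := hre.exists_walk_length_eq_dist
    have := SimpleGraph.dist_le (w.map e.symm.toHom)
    rw [SimpleGraph.Walk.length_map, hw] at this
    simpa using this

section Proj
variable {V W : Set (Λ → Bool)} {B : Set Λ}

lemma dset_proj_eq (B : Set Λ) (x y : Λ → Bool) :
    dset (proj B x) (proj B y) = Subtype.val ⁻¹' dset x y := rfl

lemma dset_proj_finite {x y : Λ → Bool} (h : (dset x y).Finite) :
    (dset (proj B x) (proj B y)).Finite := by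
  rw [dset_proj_eq]
  exact Set.Finite.preimage (Set.injOn_of_injective Subtype.val_injective) h

lemma proj_walk_s15 (hV : IsPartialCube V) (hW : ConvexIn V W) :
    ∀ (n : ℕ) (x y : Λ → Bool) (hx : x ∈ W) (hy : y ∈ W), (dset x y).ncard = n →
    ∃ w : (pcGraph (proj B '' W)).Walk ⟨proj B x, ⟨x, hx, rfl⟩⟩ ⟨proj B y, ⟨y, hy, rfl⟩⟩,
      w.length = (dset (proj B x) (proj B y)).ncard := by
  intro n
  induction n with
  | zero =>
    intro x y hx hy hn
    have hfin : (dset x y).Finite := pc_dset_finite hV ⟨x, hW.1 hx⟩ ⟨y, hW.1 hy⟩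
    have hxy : x = y := dset_eq_empty_iff.mp ((Set.ncard_eq_zero hfin).mp hn)
    subst hxy
    refine ⟨SimpleGraph.Walk.nil.copy rfl (Subtype.ext rfl), ?_⟩
    rw [SimpleGraph.Walk.length_copy, dset_eq_empty_iff.mpr rfl]
    simp
  | succ n ih =>
    intro x y hx hy hn
    have hxV : x ∈ V := hW.1 hx
    have hyV : y ∈ V := hW.1 hy
    have hfinxy : (dset x y).Finite := pc_dset_finite hV ⟨x, hxV⟩ ⟨y, hyV⟩
    have hne : (⟨x, hxV⟩ : ↥V) ≠ ⟨y, hyV⟩ := by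
      intro h
      have : x = y := congrArg Subtype.val h
      rw [dset_eq_empty_iff.mpr this] at hn
      simp at hn
    obtain ⟨z, hadj, hbetw⟩ := pc_step hV hne
    have hzW : (z : Λ → Bool) ∈ W := hW.2 ⟨x, hxV⟩ ⟨y, hyV⟩ z hx hy hbetw
    have hpw : ∀ f, (z : Λ → Bool) f = x f ∨ (z : Λ → Bool) f = y f :=
      (pc_between_iff hV _ _ _).mp hbetw
    obtain ⟨f0, hf0⟩ := adj_dset hadj
    have hxz : x f0 ≠ (z : Λ → Bool) f0 := by
      have : f0 ∈ dset x (z : Λ → Bool) := by rw [hf0]; rfl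
      exact this
    have hzy : (z : Λ → Bool) f0 = y f0 := by
      rcases hpw f0 with h | h
      · exact absurd h.symm hxz
      · exact h
    have hf0mem : f0 ∈ dset x y := by
      simp only [dset, Set.mem_setOf_eq]
      rw [← hzy]; exact hxz
    have hother : ∀ g, g ≠ f0 → x g = (z : Λ → Bool) g := by
      intro g hg
      by_contra hc
      have : g ∈ dset x (z : Λ → Bool) := hc
      rw [hf0] at this
      exact hg this
    have hds : dset (z : Λ → Bool) y = dset x y \ {f0} := by
      ext g
      simp only [dset, Set.mem_setOf_eq, Set.mem_diff, Set.mem_singleton_iff]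
      by_cases hg : g = f0
      · subst hg; simp [hzy]
      · rw [← hother g hg]; simp [hg]
    have hncard : (dset (z : Λ → Bool) y).ncard = n := by
      rw [hds, Set.ncard_diff_singleton_of_mem hf0mem, hn]
      omega
    obtain ⟨w', hw'⟩ := ih (z : Λ → Bool) y hzW hy hncard
    by_cases hB : f0 ∈ B
    · have hpe : proj B x = proj B (z : Λ → Bool) := by
        funext h
        exact hother h.1 (fun hc => h.2 (hc ▸ hB))
      refine ⟨w'.copy (Subtype.ext hpe.symm) rfl, ?_⟩
      rw [SimpleGraph.Walk.length_copy, hw', hpe]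
    · have hadjp : (pcGraph (proj B '' W)).Adj ⟨proj B x, ⟨x, hx, rfl⟩⟩
          ⟨proj B (z : Λ → Bool), ⟨(z : Λ → Bool), hzW, rfl⟩⟩ := by
        refine ⟨⟨f0, hB⟩, hxz, ?_⟩
        intro g hg
        exact hother g.1 (fun hc => hg (Subtype.ext hc))
      refine ⟨SimpleGraph.Walk.cons hadjp w', ?_⟩
      rw [SimpleGraph.Walk.length_cons, hw']
      have hdsp : dset (proj B (z : Λ → Bool)) (proj B y) =
          dset (proj B x) (proj B y) \ {⟨f0, hB⟩} := by
        rw [dset_proj_eq, dset_proj_eq, hds]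
        ext h
        simp only [Set.mem_preimage, Set.mem_diff, Set.mem_singleton_iff]
        constructor
        · rintro ⟨h1, h2⟩; exact ⟨h1, fun hc => h2 (congrArg Subtype.val hc)⟩
        · rintro ⟨h1, h2⟩; exact ⟨h1, fun hc => h2 (Subtype.ext hc)⟩
      have hmem : (⟨f0, hB⟩ : {g : Λ // g ∉ B}) ∈ dset (proj B x) (proj B y) := hf0mem
      have hfinp : (dset (proj B x) (proj B y)).Finite := dset_proj_finite hfinxy
      rw [hdsp, Set.ncard_diff_singleton_of_mem hmem]
      have : 0 < (dset (proj B x) (proj B y)).ncard :=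
        (Set.ncard_pos hfinp).mpr ⟨_, hmem⟩
      omega

lemma proj_dist (hV : IsPartialCube V) (hW : ConvexIn V W) {x y : Λ → Bool}
    (hx : x ∈ W) (hy : y ∈ W) :
    (pcGraph (proj B '' W)).dist ⟨proj B x, ⟨x, hx, rfl⟩⟩ ⟨proj B y, ⟨y, hy, rfl⟩⟩ =
      (dset (proj B x) (proj B y)).ncard := by
  obtain ⟨w, hw⟩ := proj_walk_s15 hV hW (dset x y).ncard x y hx hy rfl
  apply le_antisymm
  · exact hw ▸ SimpleGraph.dist_le w
  · exact dist_ge_ncard ⟨w⟩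

end Proj


section Q3lemmas

lemma q3_mem_iff {x : Fin 3 → Bool} : x ∈ Q3minusSet ↔ x ≠ fun _ => true := Iff.rfl

lemma q3_exists_false {x : Fin 3 → Bool} (hx : x ∈ Q3minusSet) : ∃ i, x i = false := by
  by_contra hc
  push_neg at hc
  exact hx (funext fun i => by
    cases h : x i
    · exact absurd h (hc i)
    · rfl)

lemma q3_walk : ∀ (n : ℕ) (p q : ↥Q3minusSet), (dset (p : Fin 3 → Bool) q).ncard = n →
    ∃ w : (pcGraph Q3minusSet).Walk p q, w.length = n := by
  intro n
  induction n with
  | zero =>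
    intro p q hn
    have hfin : (dset (p : Fin 3 → Bool) q).Finite := Set.toFinite _
    have : (p : Fin 3 → Bool) = q := dset_eq_empty_iff.mp ((Set.ncard_eq_zero hfin).mp hn)
    refine ⟨SimpleGraph.Walk.nil.copy rfl (Subtype.ext this), ?_⟩
    rw [SimpleGraph.Walk.length_copy]; rfl
  | succ n ih =>
    intro p q hn
    have hfin : (dset (p : Fin 3 → Bool) q).Finite := Set.toFinite _
    have hne : dset (p : Fin 3 → Bool) q ≠ ∅ := by
      intro h; rw [h] at hn; simp at hn
    -- find a good coordinate to flip
    have hstep : ∃ f0, (p : Fin 3 → Bool) f0 ≠ (q : Fin 3 → Bool) f0 ∧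
        Function.update (p : Fin 3 → Bool) f0 ((q : Fin 3 → Bool) f0) ∈ Q3minusSet := by
      by_contra hc
      push_neg at hc
      obtain ⟨f0, hf0⟩ := Set.nonempty_iff_ne_empty.mpr hne
      have h0 := hc f0 hf0
      rw [q3_mem_iff, not_not] at h0
      have hq0 : (q : Fin 3 → Bool) f0 = true := by
        have := congrFun h0 f0
        rwa [Function.update_self] at this
      have hpg : ∀ g, g ≠ f0 → (p : Fin 3 → Bool) g = true := by
        intro g hg
        have := congrFun h0 g
        rwa [Function.update_of_ne hg] at this
      obtain ⟨j, hj⟩ := q3_exists_false q.2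
      have hjf0 : j ≠ f0 := by
        intro h; rw [h] at hj
        exact absurd (hq0.symm.trans hj) (by decide)
      have hjd : j ∈ dset (p : Fin 3 → Bool) q := by
        simp only [dset, Set.mem_setOf_eq, hpg j hjf0, hj]
        decide
      have h1 := hc j hjd
      rw [q3_mem_iff, not_not] at h1
      have := congrFun h1 f0
      rw [Function.update_of_ne (Ne.symm hjf0)] at this
      have hp0 : (p : Fin 3 → Bool) f0 = false := by
        cases h : (p : Fin 3 → Bool) f0
        · rfl
        · exact absurd (h.trans hq0.symm) hf0
      exact absurd (hp0.symm.trans this) (by decide)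
    obtain ⟨f0, hf0, hzmem⟩ := hstep
    set zf : Fin 3 → Bool := Function.update (p : Fin 3 → Bool) f0 ((q : Fin 3 → Bool) f0)
      with hzf
    have hadj : (pcGraph Q3minusSet).Adj p ⟨zf, hzmem⟩ := by
      refine ⟨f0, ?_, ?_⟩
      · show (p : Fin 3 → Bool) f0 ≠ zf f0
        rw [hzf, Function.update_self]; exact hf0
      · intro g hg
        show (p : Fin 3 → Bool) g = zf g
        rw [hzf, Function.update_of_ne hg]
    have hds : dset zf (q : Fin 3 → Bool) = dset (p : Fin 3 → Bool) q \ {f0} := by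
      ext g
      by_cases hg : g = f0
      · subst hg
        simp [dset, hzf, Function.update_self]
      · simp [dset, hzf, Function.update_of_ne hg, hg]
    have hf0mem : f0 ∈ dset (p : Fin 3 → Bool) q := hf0
    have hzn : (dset zf (q : Fin 3 → Bool)).ncard = n := by
      rw [hds, Set.ncard_diff_singleton_of_mem hf0mem, hn]
      omega
    obtain ⟨w', hw'⟩ := ih ⟨zf, hzmem⟩ q hzn
    exact ⟨SimpleGraph.Walk.cons hadj w', by rw [SimpleGraph.Walk.length_cons, hw']⟩

lemma q3_dist (p q : ↥Q3minusSet) :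
    (pcGraph Q3minusSet).dist p q = (dset (p : Fin 3 → Bool) q).ncard := by
  obtain ⟨w, hw⟩ := q3_walk (dset (p : Fin 3 → Bool) q).ncard p q rfl
  exact le_antisymm (hw ▸ SimpleGraph.dist_le w) (dist_ge_ncard ⟨w⟩)

end Q3lemmas


section Convexity
variable {V V' W W1 W2 S : Set (Λ → Bool)}

lemma gated_convex_s15 (hV : IsPartialCube V) (hS : GatedIn V S) : ConvexIn V S := by
  refine ⟨hS.1, ?_⟩
  intro u v w hu hv hbetw
  obtain ⟨g, hgS, hgate⟩ := hS.2 w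
  have h1 := hgate u hu
  have h2 := hgate v hv
  have htri := hV.1.dist_triangle (u := u) (v := g) (w := v)
  have c1 : (pcGraph V).dist u w = (pcGraph V).dist w u := SimpleGraph.dist_comm
  have c2 : (pcGraph V).dist g u = (pcGraph V).dist u g := SimpleGraph.dist_comm
  have hwg : (pcGraph V).dist w g = 0 := by omega
  have : w = g := (hV.1.dist_eq_zero_iff).mp hwg
  rw [this]; exact hgS

lemma convex_trans (hV : IsPartialCube V) (hV' : IsPartialCube V') (hsub : V' ⊆ V)
    (hW : ConvexIn V W) (hWV' : W ⊆ V') : ConvexIn V' W := by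
  refine ⟨hWV', ?_⟩
  intro u v w hu hv hb
  have e : ∀ a b : ↥V', (pcGraph V').dist a b =
      (pcGraph V).dist ⟨a.1, hsub a.2⟩ ⟨b.1, hsub b.2⟩ := by
    intro a b; rw [hV'.2, hV.2]
  rw [e, e, e] at hb
  exact hW.2 ⟨u.1, hsub u.2⟩ ⟨v.1, hsub v.2⟩ ⟨w.1, hsub w.2⟩ hu hv hb

lemma convex_inter (h1 : ConvexIn V W1) (h2 : ConvexIn V W2) : ConvexIn V (W1 ∩ W2) :=
  ⟨fun x hx => h1.1 hx.1, fun u v w hu hv hb =>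
    ⟨h1.2 u v w hu.1 hv.1 hb, h2.2 u v w hu.2 hv.2 hb⟩⟩

end Convexity

section Core

instance : DecidablePred (· ∈ Q3minusSet) :=
  fun x => decidable_of_iff (¬ x = fun _ => true) Iff.rfl

abbrev Vq := {x : Fin 3 → Bool // x ∈ Q3minusSet}

def gpB (p : Vq → Bool) : Prop :=
  ∀ a : Vq, ∃ b : Vq, p b = true ∧ ∀ c : Vq, p c = true →
    ∀ i, b.1 i = a.1 i ∨ b.1 i = c.1 i

instance : DecidablePred gpB := fun p => by unfold gpB; infer_instance

set_option maxHeartbeats 4000000 in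
set_option maxRecDepth 10000 in
lemma st1 : ∀ p : Vq → Bool, gpB p →
    (∀ a, p a = true) ∨ ∃ i : Fin 3, ∀ a : Vq, p a = true → a.1 i = false := by decide

lemma core_pair (S1 S2 : Set (↥Q3minusSet))
    (hcov : ∀ a, a ∈ S1 ∨ a ∈ S2)
    (hgp1 : ∀ a : ↥Q3minusSet, ∃ b ∈ S1, ∀ c ∈ S1, ∀ i,
      (b : Fin 3 → Bool) i = (a : Fin 3 → Bool) i ∨ (b : Fin 3 → Bool) i = (c : Fin 3 → Bool) i)
    (hgp2 : ∀ a : ↥Q3minusSet, ∃ b ∈ S2, ∀ c ∈ S2, ∀ i,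
      (b : Fin 3 → Bool) i = (a : Fin 3 → Bool) i ∨ (b : Fin 3 → Bool) i = (c : Fin 3 → Bool) i) :
    (∀ a, a ∈ S1) ∨ (∀ a, a ∈ S2) := by
  classical
  let p1 : Vq → Bool := fun a => if a ∈ S1 then true else false
  let p2 : Vq → Bool := fun a => if a ∈ S2 then true else false
  have hp1iff : ∀ a, p1 a = true ↔ a ∈ S1 := fun a => by simp [p1]
  have hp2iff : ∀ a, p2 a = true ↔ a ∈ S2 := fun a => by simp [p2]
  have hgb1 : gpB p1 := by
    intro a; obtain ⟨b, hb, h⟩ := hgp1 a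
    exact ⟨b, (hp1iff b).mpr hb, fun c hc => h c ((hp1iff c).mp hc)⟩
  have hgb2 : gpB p2 := by
    intro a; obtain ⟨b, hb, h⟩ := hgp2 a
    exact ⟨b, (hp2iff b).mpr hb, fun c hc => h c ((hp2iff c).mp hc)⟩
  rcases st1 p1 hgb1 with h | ⟨i, hi⟩
  · exact Or.inl fun a => (hp1iff a).mp (h a)
  rcases st1 p2 hgb2 with h | ⟨j, hj⟩
  · exact Or.inr fun a => (hp2iff a).mp (h a)
  exfalso
  obtain ⟨k, hki, hkj⟩ : ∃ k : Fin 3, k ≠ i ∧ k ≠ j :=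
    (by decide : ∀ i' j' : Fin 3, ∃ k, k ≠ i' ∧ k ≠ j') i j
  set wv : Fin 3 → Bool := fun m => (m == i) || (m == j) with hwv
  have hwmem : wv ∈ Q3minusSet := by
    intro hc
    have := congrFun hc k
    simp only [hwv] at this
    rw [beq_eq_false_iff_ne.mpr hki, beq_eq_false_iff_ne.mpr hkj] at this
    exact absurd this (by decide)
  have hwi : wv i = true := by simp [hwv]
  have hwj : wv j = true := by simp [hwv]
  rcases hcov ⟨wv, hwmem⟩ with h | h
  · have h2 := hi ⟨wv, hwmem⟩ ((hp1iff _).mpr h)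
    have : wv i = false := h2
    rw [hwi] at this; exact absurd this (by decide)
  · have h2 := hj ⟨wv, hwmem⟩ ((hp2iff _).mpr h)
    have : wv j = false := h2
    rw [hwj] at this; exact absurd this (by decide)

end Core


/-- If a partial cube `G` is a gated amalgam of two partial cubes `G₁`, `G₂`
each of which excludes `Q₃⁻` as a pc-minor, then `G` excludes `Q₃⁻` as well. -/
theorem stmt15 (V V1 V2 : Set (Λ → Bool)) (hV : IsPartialCube V)
    (hg1 : GatedIn V V1) (hg2 : GatedIn V V2)
    (hunion : V1 ∪ V2 = V) (hinter : (V1 ∩ V2).Nonempty)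
    (h1 : Hypercellular V1) (h2 : Hypercellular V2) :
    Hypercellular V := by
  refine ⟨hV, ?_⟩
  intro B W hW
  by_contra hcon
  rw [not_isEmpty_iff] at hcon
  obtain ⟨φ⟩ := hcon
  have main : ∀ (Vi : Set (Λ → Bool)), GatedIn V Vi → Hypercellular Vi →
      proj B '' (W ∩ Vi) = proj B '' W → False := by
    intro Vi hgi hhi heq
    have hconvV : ConvexIn V (W ∩ Vi) := convex_inter hW (gated_convex_s15 hV hgi)
    have hconv : ConvexIn Vi (W ∩ Vi) :=
      convex_trans hV hhi.1 hgi.1 hconvV Set.inter_subset_right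
    have hie := hhi.2 B (W ∩ Vi) hconv
    rw [heq] at hie
    exact hie.false φ
  by_cases hWV1 : (W ∩ V1).Nonempty
  case neg =>
    refine main V2 hg2 h2 ?_
    have : W ∩ V2 = W := by
      apply Set.Subset.antisymm Set.inter_subset_left
      intro x hx
      have hxV : x ∈ V1 ∪ V2 := by rw [hunion]; exact hW.1 hx
      rcases hxV with h | h
      · exact absurd ⟨x, hx, h⟩ hWV1
      · exact ⟨hx, h⟩
    rw [this]
  case pos =>
  by_cases hWV2 : (W ∩ V2).Nonempty
  case neg =>
    refine main V1 hg1 h1 ?_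
    have : W ∩ V1 = W := by
      apply Set.Subset.antisymm Set.inter_subset_left
      intro x hx
      have hxV : x ∈ V1 ∪ V2 := by rw [hunion]; exact hW.1 hx
      rcases hxV with h | h
      · exact ⟨hx, h⟩
      · exact absurd ⟨x, hx, h⟩ hWV2
    rw [this]
  case pos =>
  obtain ⟨y1, hy1W, hy1V1⟩ := hWV1
  obtain ⟨y2, hy2W, hy2V2⟩ := hWV2
  let SS : Set (Λ → Bool) → Set (↥Q3minusSet) := fun Vi =>
    {a | ∃ x, (x ∈ W ∧ x ∈ Vi) ∧
      proj B x = ((φ.symm a : ↥(proj B '' W)) : {g : Λ // g ∉ B} → Bool)}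
  have hcov : ∀ a, a ∈ SS V1 ∨ a ∈ SS V2 := by
    intro a
    obtain ⟨x, hxW, hxp⟩ := (φ.symm a).2
    have hxV : x ∈ V1 ∪ V2 := by rw [hunion]; exact hW.1 hxW
    rcases hxV with h | h
    · exact Or.inl ⟨x, ⟨hxW, h⟩, hxp⟩
    · exact Or.inr ⟨x, ⟨hxW, h⟩, hxp⟩
  have hgp : ∀ (Vi : Set (Λ → Bool)), GatedIn V Vi → ∀ y0, y0 ∈ W → y0 ∈ Vi →
      ∀ a : ↥Q3minusSet, ∃ b ∈ SS Vi, ∀ c ∈ SS Vi, ∀ i,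
        (b : Fin 3 → Bool) i = (a : Fin 3 → Bool) i ∨
        (b : Fin 3 → Bool) i = (c : Fin 3 → Bool) i := by
    intro Vi hgi y0 hy0W hy0Vi a
    obtain ⟨x, hxW, hxp⟩ := (φ.symm a).2
    have hxV : x ∈ V := hW.1 hxW
    obtain ⟨g, hgVi, hgate⟩ := hgi.2 ⟨x, hxV⟩
    have hgW : (g : Λ → Bool) ∈ W :=
      hW.2 ⟨x, hxV⟩ ⟨y0, hW.1 hy0W⟩ g hxW hy0W (hgate ⟨y0, hW.1 hy0W⟩ hy0Vi).symm
    have hpgI : proj B (g : Λ → Bool) ∈ proj B '' W := ⟨(g : Λ → Bool), hgW, rfl⟩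
    refine ⟨φ ⟨proj B (g : Λ → Bool), hpgI⟩, ⟨(g : Λ → Bool), ⟨hgW, hgVi⟩, ?_⟩, ?_⟩
    · rw [φ.symm_apply_apply]
    · intro c hc i
      obtain ⟨y, ⟨hyW, hyVi⟩, hyp⟩ := hc
      have hyV : y ∈ V := hW.1 hyW
      have hb1 : (pcGraph V).dist ⟨x, hxV⟩ g + (pcGraph V).dist g ⟨y, hyV⟩ =
          (pcGraph V).dist ⟨x, hxV⟩ ⟨y, hyV⟩ := (hgate ⟨y, hyV⟩ hyVi).symm
      have hpw := (pc_between_iff hV ⟨x, hxV⟩ g ⟨y, hyV⟩).mp hb1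
      have hhamd := (ham_add_iff (x := proj B x) (g := proj B (g : Λ → Bool))
          (y := proj B y)
          (dset_proj_finite (B := B) (pc_dset_finite hV ⟨x, hxV⟩ g))
          (dset_proj_finite (B := B) (pc_dset_finite hV g ⟨y, hyV⟩))).mpr
          (fun h => hpw h.1)
      have d1 := proj_dist (B := B) hV hW hxW hgW
      have d2 := proj_dist (B := B) hV hW hgW hyW
      have d3 := proj_dist (B := B) hV hW hxW hyW
      obtain ⟨w1, -⟩ := proj_walk_s15 (B := B) hV hW _ x (g : Λ → Bool) hxW hgW rfl
      obtain ⟨w2, -⟩ := proj_walk_s15 (B := B) hV hW _ (g : Λ → Bool) y hgW hyW rfl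
      obtain ⟨w3, -⟩ := proj_walk_s15 (B := B) hV hW _ x y hxW hyW rfl
      have t1 := iso_dist φ w1.reachable
      have t2 := iso_dist φ w2.reachable
      have t3 := iso_dist φ w3.reachable
      have ha : φ ⟨proj B x, ⟨x, hxW, rfl⟩⟩ = a := by
        have hsa : φ.symm a = ⟨proj B x, ⟨x, hxW, rfl⟩⟩ := (Subtype.ext hxp).symm
        rw [← hsa, φ.apply_symm_apply]
      have hcy : φ ⟨proj B y, ⟨y, hyW, rfl⟩⟩ = c := by
        have : φ.symm c = ⟨proj B y, ⟨y, hyW, rfl⟩⟩ := (Subtype.ext hyp).symm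
        rw [← this, φ.apply_symm_apply]
      have hq : (pcGraph Q3minusSet).dist a (φ ⟨proj B (g : Λ → Bool), hpgI⟩) +
          (pcGraph Q3minusSet).dist (φ ⟨proj B (g : Λ → Bool), hpgI⟩) c =
          (pcGraph Q3minusSet).dist a c := by
        rw [← ha, ← hcy, t1, t2, t3, d1, d2, d3]
        exact hhamd
      rw [q3_dist, q3_dist, q3_dist] at hq
      exact (ham_add_iff (Set.toFinite _) (Set.toFinite _)).mp hq i
  rcases core_pair (SS V1) (SS V2) hcov (hgp V1 hg1 y1 hy1W hy1V1)
      (hgp V2 hg2 y2 hy2W hy2V2) with hall | hall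
  · refine main V1 hg1 h1 ?_
    apply Set.Subset.antisymm (Set.image_mono Set.inter_subset_left)
    rintro p hp
    obtain ⟨x, ⟨hxW, hxV1⟩, hxp⟩ := hall (φ ⟨p, hp⟩)
    rw [φ.symm_apply_apply] at hxp
    exact ⟨x, ⟨hxW, hxV1⟩, hxp⟩
  · refine main V2 hg2 h2 ?_
    apply Set.Subset.antisymm (Set.image_mono Set.inter_subset_left)
    rintro p hp
    obtain ⟨x, ⟨hxW, hxV2⟩, hxp⟩ := hall (φ ⟨p, hp⟩)
    rw [φ.symm_apply_apply] at hxp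
    exact ⟨x, ⟨hxW, hxV2⟩, hxp⟩
end
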